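/- arXiv:1505.02049 — 9 statements merged into one kernel-verified Lean document; each statement's English description precedes it below -/
import Mathlib

section
/- Let w : ℕ → (0,∞) with w(0) = 1, and define the canonical partition function Z_{L,N} = Σ_{η ∈ ℕ^L, Σηₓ = N} Π_x w(ηₓ). If the family of canonical conditional product measures π_{L,N}[η] = (1/Z_{L,N}) Π_x w(ηₓ) is stochastically ordered in N (π_{L,N} ≤ π_{L,N+1}), then Z_{L,N}/w(N) ≤ Z_{L,N+1}/w(N+1) for all N ≥ 0. -/
open Filter Topology

/-- Canonical partition function `Z_{L,N} = Σ_{η ∈ ℕ^L, Ση = N} Π_x w(η_x)`. -/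
noncomputable def Zpart (w : ℕ → ℝ) (L N : ℕ) : ℝ :=
  ∑ η ∈ Finset.Nat.antidiagonalTuple L N, ∏ x, w (η x)

/-- The canonical measures `π_{L,N}` are stochastically ordered, `π_{L,N} ≤ π_{L,M}`:
expectations of monotone (increasing) functions are ordered. -/
def canonicalStochLE (w : ℕ → ℝ) (L N M : ℕ) : Prop :=
  ∀ f : (Fin L → ℕ) → ℝ, Monotone f →
    (∑ η ∈ Finset.Nat.antidiagonalTuple L N, (∏ x, w (η x)) * f η) / Zpart w L N ≤
    (∑ η ∈ Finset.Nat.antidiagonalTuple L M, (∏ x, w (η x)) * f η) / Zpart w L M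

lemma single_mem_antidiagonalTuple {L N : ℕ} (i0 : Fin L) :
    (fun x => if x = i0 then N else 0) ∈ Finset.Nat.antidiagonalTuple L N := by
  rw [Finset.Nat.mem_antidiagonalTuple]
  rw [Finset.sum_ite_eq' Finset.univ i0 (fun _ => N)]
  simp

lemma Zpart_pos (w : ℕ → ℝ) (hw : ∀ n, 0 < w n) (L N : ℕ) (hL : 1 ≤ L) :
    0 < Zpart w L N := by
  apply Finset.sum_pos
  · intro η _
    exact Finset.prod_pos fun x _ => hw _
  · exact ⟨_, single_mem_antidiagonalTuple ⟨0, hL⟩⟩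

lemma sum_indicator_eq (w : ℕ → ℝ) (hw0 : w 0 = 1) {L : ℕ} (N : ℕ) (i0 : Fin L) :
    (∑ η ∈ Finset.Nat.antidiagonalTuple L N,
      (∏ x, w (η x)) * (if (∀ x : Fin L, x ≠ i0 → η x = 0) then (1:ℝ) else 0)) = w N := by
  classical
  have hmem := single_mem_antidiagonalTuple (N := N) i0
  rw [Finset.sum_eq_single_of_mem _ hmem]
  · rw [if_pos]
    · rw [mul_one]
      rw [Finset.prod_eq_single i0]
      · simp
      · intro x _ hx
        simp [hx, hw0]
      · simp
    · intro x hx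
      simp [hx]
  · intro η hη hne
    rw [if_neg, mul_zero]
    intro hcond
    apply hne
    have hsum : ∑ x, η x = N := (Finset.Nat.mem_antidiagonalTuple).mp hη
    have hi0 : η i0 = N := by
      rw [← hsum, Fintype.sum_eq_single i0 hcond]
    funext x
    by_cases hx : x = i0
    · simp [hx, hi0]
    · simp [hx, hcond x hx]

/-- If the canonical conditional product measures with weights `w`, `w(0) = 1`, are
stochastically ordered in `N`, then `Z_{L,N}/w(N) ≤ Z_{L,N+1}/w(N+1)` for all `N`. -/
theorem Zratio_mono_of_canonical_ordered (w : ℕ → ℝ) (hw : ∀ n, 0 < w n)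
    (hw0 : w 0 = 1) (L : ℕ) (hL : 2 ≤ L)
    (hord : ∀ N : ℕ, canonicalStochLE w L N (N + 1)) :
    ∀ N : ℕ, Zpart w L N / w N ≤ Zpart w L (N + 1) / w (N + 1) := by
  intro N
  have hL1 : 1 ≤ L := by omega
  set i0 : Fin L := ⟨0, hL1⟩
  set f : (Fin L → ℕ) → ℝ :=
    fun η => -(if (∀ x : Fin L, x ≠ i0 → η x = 0) then (1:ℝ) else 0) with hf
  have hmono : Monotone f := by
    intro η ζ hle
    simp only [hf, neg_le_neg_iff]
    by_cases hζ : ∀ x : Fin L, x ≠ i0 → ζ x = 0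
    · have hη : ∀ x : Fin L, x ≠ i0 → η x = 0 := fun x hx =>
        Nat.le_zero.mp ((hζ x hx) ▸ hle x)
      rw [if_pos hζ, if_pos hη]
    · rw [if_neg hζ]
      split <;> norm_num
  have key := hord N f hmono
  have hsum : ∀ M, (∑ η ∈ Finset.Nat.antidiagonalTuple L M, (∏ x, w (η x)) * f η)
      = -(w M) := by
    intro M
    simp only [hf, mul_neg]
    rw [Finset.sum_neg_distrib, sum_indicator_eq w hw0 M i0]
  rw [hsum N, hsum (N + 1), neg_div, neg_div, neg_le_neg_iff, div_le_div_iff₀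
    (Zpart_pos w hw L (N+1) hL1) (Zpart_pos w hw L N hL1)] at key
  rw [div_le_div_iff₀ (hw N) (hw (N+1))]
  linarith [key]
end

section
/- Let w : ℕ → (0,∞) have finite and non-zero first moment, i.e. 0 < Σ_{n≥0} n·w(n) < ∞. Then there exists a sequence N_m ∈ ℕ with N_m → ∞ such that for all m and all k ∈ {0,…,N_m − 1}, w(N_m − k)/w(N_m) ≥ 1 + k/N_m. -/
open Filter Topology

/-- For positive weights `w` with finite, non-zero first moment there is a sequence
`N_m → ∞` along which `w(N_m - k)/w(N_m) ≥ 1 + k/N_m` for all `k < N_m`. -/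
theorem exists_ratio_lower_bound_seq (w : ℕ → ℝ) (hw : ∀ n, 0 < w n)
    (hsum : Summable fun n : ℕ => (n : ℝ) * w n)
    (hpos : 0 < ∑' n : ℕ, (n : ℝ) * w n) :
    ∃ N : ℕ → ℕ, Tendsto N atTop atTop ∧
      ∀ m : ℕ, ∀ k : ℕ, k < N m →
        w (N m - k) / w (N m) ≥ 1 + (k : ℝ) / (N m : ℝ) := by
  set a : ℕ → ℝ := fun n => (n : ℝ) * w n with ha_def
  have ha0 : Tendsto a atTop (nhds 0) := hsum.tendsto_atTop_zero
  have hex : ∀ m : ℕ, ∃ x ∈ Finset.Icc 1 (m + 1),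
      ∀ y ∈ Finset.Icc 1 (m + 1), a x ≤ a y := by
    intro m
    exact Finset.exists_min_image _ a ⟨1, by simp⟩
  choose N hNmem hNmin using hex
  have hN1 : ∀ m, 1 ≤ N m := fun m => (Finset.mem_Icc.1 (hNmem m)).1
  have hN2 : ∀ m, N m ≤ m + 1 := fun m => (Finset.mem_Icc.1 (hNmem m)).2
  refine ⟨N, ?_, ?_⟩
  · -- N m → ∞
    rw [tendsto_atTop]
    intro K
    rcases Nat.eq_zero_or_pos K with hK | hK
    · filter_upwards with m; omega
    have hSne : (Finset.Icc 1 K).Nonempty := ⟨1, Finset.mem_Icc.2 ⟨le_refl 1, hK⟩⟩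
    set μ := (Finset.Icc 1 K).inf' hSne a with hμdef
    have hμpos : 0 < μ := by
      rw [hμdef, Finset.lt_inf'_iff]
      intro n hn
      have hn1 : 1 ≤ n := (Finset.mem_Icc.1 hn).1
      exact mul_pos (by exact_mod_cast hn1) (hw n)
    have hev : ∀ᶠ n in atTop, a n < μ :=
      ha0.eventually (Filter.Tendsto.eventually_lt_const hμpos tendsto_id) |>.mono
        (fun n hn => hn)
    rcases eventually_atTop.1 hev with ⟨M, hM⟩
    filter_upwards [eventually_ge_atTop (max M 1)] with m hm
    by_contra hcon
    push_neg at hcon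
    have hNK : N m ∈ Finset.Icc 1 K := Finset.mem_Icc.2 ⟨hN1 m, by omega⟩
    have h1 : μ ≤ a (N m) := Finset.inf'_le a hNK
    have hmem : max M 1 ∈ Finset.Icc 1 (m + 1) :=
      Finset.mem_Icc.2 ⟨le_max_right _ _, by omega⟩
    have h2 : a (N m) ≤ a (max M 1) := hNmin m _ hmem
    have h3 : a (max M 1) < μ := hM _ (le_max_left _ _)
    linarith
  · -- the ratio bound
    intro m k hk
    set n := N m - k with hn_def
    have hn1 : 1 ≤ n := by omega
    have hnmem : n ∈ Finset.Icc 1 (m + 1) :=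
      Finset.mem_Icc.2 ⟨hn1, by have := hN2 m; omega⟩
    have hmono : a (N m) ≤ a n := hNmin m n hnmem
    have hA : (0 : ℝ) < (N m : ℝ) := by exact_mod_cast (hN1 m)
    have hcast : ((n : ℕ) : ℝ) = (N m : ℝ) - (k : ℝ) := by
      rw [hn_def]; push_cast [Nat.cast_sub hk.le]; ring
    have hAk : (0 : ℝ) < (N m : ℝ) - (k : ℝ) := by
      have : (k : ℝ) < (N m : ℝ) := by exact_mod_cast hk
      linarith
    have hmono' : (N m : ℝ) * w (N m) ≤ ((N m : ℝ) - (k : ℝ)) * w n := by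
      have := hmono
      simp only [ha_def] at this
      rwa [hcast] at this
    have hwn : 0 < w n := hw n
    have hwN : 0 < w (N m) := hw (N m)
    have hk0 : (0 : ℝ) ≤ (k : ℝ) := Nat.cast_nonneg k
    have step : ((N m : ℝ) + k) * w (N m) ≤ (N m : ℝ) * w n := by
      nlinarith [mul_le_mul_of_nonneg_left hmono' hA.le,
        mul_nonneg (mul_nonneg hk0 hk0) hwN.le]
    rw [ge_iff_le, le_div_iff₀ hwN]
    calc (1 + (k : ℝ) / (N m : ℝ)) * w (N m)
        = (((N m : ℝ) + k) * w (N m)) / (N m : ℝ) := by field_simp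
      _ ≤ ((N m : ℝ) * w n) / (N m : ℝ) := by gcongr
      _ = w n := by field_simp
end

section
/- Let w : ℕ → (0,∞) with w(0)=1, Σ_{n} w(n) = z(1) ∈ (0,∞), w(n−1)/w(n) → 1, and suppose the two-site partition functions satisfy Z_{2,N}/w(N) → 2z(1) as N → ∞, where Z_{2,N} = Σ_{k=0}^N w(k)w(N−k). If additionally 0 < Σ n·w(n) < ∞, then there exists a sequence N_ℓ → ∞ and ℓ₀ such that for all ℓ ≥ ℓ₀ and all n ∈ {0,…,N_ℓ}, Z_{2,N_ℓ − n}/w(N_ℓ) > 2z(1). -/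
open Filter Topology

/-- Two-site partition function `Z_{2,N} = (w∗w)(N)`. -/
noncomputable def Ztwo (w : ℕ → ℝ) (N : ℕ) : ℝ :=
  ∑ k ∈ Finset.range (N + 1), w k * w (N - k)

lemma Ztwo_pos (w : ℕ → ℝ) (hw : ∀ n, 0 < w n) (N : ℕ) : 0 < Ztwo w N :=
  Finset.sum_pos (fun k _ => mul_pos (hw k) (hw _)) ⟨0, by simp⟩

lemma pair_le_Ztwo (w : ℕ → ℝ) (hw : ∀ n, 0 < w n) (M : ℕ) :
    2 * ∑ k ∈ Finset.range (M / 2), w k * w (M - k) ≤ Ztwo w M := by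
  classical
  set h := M / 2 with hh
  have hhM : h ≤ M := Nat.div_le_self _ _
  have h2 : 2 * h ≤ M := by omega
  set f : ℕ → ℝ := fun k => w k * w (M - k) with hf
  set s : Finset ℕ := Finset.range h with hs
  set t : Finset ℕ := s.image (fun k => M - k) with ht
  have himg : ∑ k ∈ t, f k = ∑ k ∈ s, f k := by
    rw [ht, Finset.sum_image (by
      intro a ha b hb hab
      simp only [hs, Finset.coe_range, Set.mem_Iio, Finset.mem_range] at ha hb hab
      omega)]
    refine Finset.sum_congr rfl fun k hk => ?_
    simp only [hs, Finset.mem_range] at hk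
    simp only [hf]
    rw [Nat.sub_sub_self (hk.le.trans hhM), mul_comm]
  have hdisj : Disjoint s t := by
    rw [Finset.disjoint_left]
    intro a ha hat
    simp only [hs, Finset.mem_range] at ha
    simp only [ht, Finset.mem_image, hs, Finset.mem_range] at hat
    obtain ⟨b, hb, rfl⟩ := hat
    omega
  have hsub : s ∪ t ⊆ Finset.range (M + 1) := by
    intro a ha
    simp only [Finset.mem_union, hs, Finset.mem_range, ht, Finset.mem_image] at ha ⊢
    rcases ha with ha | ⟨b, hb, rfl⟩ <;> omega
  calc 2 * ∑ k ∈ s, f k = ∑ k ∈ s, f k + ∑ k ∈ t, f k := by rw [himg]; ring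
    _ = ∑ k ∈ s ∪ t, f k := (Finset.sum_union hdisj).symm
    _ ≤ ∑ k ∈ Finset.range (M + 1), f k := by
        refine Finset.sum_le_sum_of_subset_of_nonneg hsub fun i _ _ => ?_
        exact (mul_pos (hw i) (hw _)).le
    _ = Ztwo w M := rfl

lemma exists_record (w : ℕ → ℝ) (hw : ∀ n, 0 < w n)
    (hmom : Summable fun n : ℕ => (n : ℝ) * w n) (M : ℕ) :
    ∃ N, M < N ∧ ∀ n, 1 ≤ n → n ≤ N → (N : ℝ)^2 * w N ≤ (n : ℝ)^2 * w n := by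
  classical
  have hne : (Finset.Icc 1 (M+1)).Nonempty := ⟨1, by simp⟩
  set c := (Finset.Icc 1 (M+1)).inf' hne (fun n => (n : ℝ)^2 * w n) with hc
  have hcpos : 0 < c := by
    rw [hc, Finset.lt_inf'_iff]
    intro b hb
    have hb1 : 1 ≤ b := (Finset.mem_Icc.mp hb).1
    have hb0 : (0:ℝ) < (b:ℝ) := by exact_mod_cast hb1
    exact mul_pos (by positivity) (hw b)
  have hex : ∃ N', M < N' ∧ (N' : ℝ)^2 * w N' < c := by
    by_contra hcon
    push_neg at hcon
    have hsum : Summable (fun n : ℕ => c * (((n + (M+1) : ℕ) : ℝ))⁻¹) := by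
      refine Summable.of_nonneg_of_le (fun n => by positivity) (fun n => ?_)
        ((summable_nat_add_iff (M+1)).mpr hmom)
      have hn1 : (0:ℝ) < ((n + (M+1) : ℕ) : ℝ) := by
        have : 1 ≤ n + (M+1) := by omega
        exact_mod_cast Nat.lt_of_lt_of_le Nat.zero_lt_one this
      have hcle : c ≤ ((n + (M+1) : ℕ) : ℝ)^2 * w (n + (M+1)) := hcon _ (by omega)
      rw [mul_inv_le_iff₀ hn1]
      nlinarith [hw (n + (M+1))]
    have hns : ¬ Summable (fun n : ℕ => c * (((n + (M+1) : ℕ) : ℝ))⁻¹) := by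
      intro hsum'
      have h1 : Summable (fun n : ℕ => (((n + (M+1) : ℕ) : ℝ))⁻¹) := by
        have := hsum'.mul_left c⁻¹
        refine this.congr fun n => ?_
        field_simp
      have h2 := (summable_nat_add_iff (f := fun n : ℕ => ((n : ℝ))⁻¹) (M+1)).mp h1
      exact Real.not_summable_natCast_inv h2
    exact hns hsum
  obtain ⟨N', hMN', hN'⟩ := hex
  have hne' : (Finset.Icc 1 N').Nonempty := ⟨1, by simp; omega⟩
  obtain ⟨N, hNmem, hNmin⟩ := Finset.exists_min_image (Finset.Icc 1 N')
    (fun n => (n : ℝ)^2 * w n) hne'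
  have hNle : (N : ℝ)^2 * w N ≤ (N' : ℝ)^2 * w N' := hNmin N' (by simp; omega)
  refine ⟨N, ?_, ?_⟩
  · by_contra hNM
    push_neg at hNM
    have hmem : N ∈ Finset.Icc 1 (M+1) := by
      simp only [Finset.mem_Icc] at hNmem ⊢
      omega
    have : c ≤ (N : ℝ)^2 * w N := Finset.inf'_le _ hmem
    linarith
  · intro n hn1 hnN
    refine hNmin n ?_
    simp only [Finset.mem_Icc] at hNmem ⊢
    omega

set_option maxHeartbeats 1000000 in
lemma core_lemma (w : ℕ → ℝ) (hw : ∀ n, 0 < w n) (hz : Summable w)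
    (hmom : Summable fun n : ℕ => (n : ℝ) * w n)
    {h₀ : ℕ}
    (hS : ∀ h ≥ h₀, 3 * (∑' n : ℕ, (n : ℝ) * w n) / 4 < ∑ k ∈ Finset.range h, (k : ℝ) * w k)
    {M N : ℕ} (hM : 2 * h₀ + 2 ≤ M) (hMN : M ≤ N)
    (hrec : ∀ n, 1 ≤ n → n ≤ N → (N : ℝ)^2 * w N ≤ (n : ℝ)^2 * w n) :
    2 * (∑' n, w n) * w N < Ztwo w M := by
  classical
  set S := ∑' n : ℕ, (n : ℝ) * w n with hSdef
  set z := ∑' n, w n with hzdef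
  set h := M / 2 with hh
  have hM2 : 2 ≤ M := by omega
  have hh₀ : h₀ ≤ h := by omega
  have hhM : h ≤ M := Nat.div_le_self _ _
  set A := ∑ k ∈ Finset.range h, w k with hA
  set Sh := ∑ k ∈ Finset.range h, (k : ℝ) * w k with hSh
  -- tail identities
  have hTid : A + ∑' k, w (k + h) = z := hz.sum_add_tsum_nat_add h
  have hMid : Sh + ∑' k, ((k + h : ℕ) : ℝ) * w (k + h) = S := hmom.sum_add_tsum_nat_add h
  set Th := ∑' k, w (k + h) with hTh
  set Mh := ∑' k, ((k + h : ℕ) : ℝ) * w (k + h) with hMh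
  -- M * Th ≤ 3 * Mh
  have hsummw : Summable (fun k => w (k + h)) := (summable_nat_add_iff h).mpr hz
  have hsummm : Summable (fun k => ((k + h : ℕ) : ℝ) * w (k + h)) :=
    (summable_nat_add_iff h).mpr hmom
  have hMTh : (M : ℝ) * Th ≤ 3 * Mh := by
    rw [hTh, hMh, ← tsum_mul_left, ← tsum_mul_left]
    refine Summable.tsum_le_tsum (fun k => ?_) (hsummw.mul_left _) (hsummm.mul_left _)
    have hM3h : (M : ℝ) ≤ 3 * ((k + h : ℕ) : ℝ) := by
      have : M ≤ 3 * (k + h) := by omega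
      exact_mod_cast this
    have hhint := mul_le_mul_of_nonneg_right hM3h (hw (k + h)).le
    linarith
  have hShS : 3 * S / 4 < Sh := hS h hh₀
  have hMhS : Mh = S - Sh := by linarith
  have hkey : (M : ℝ) * z < (M : ℝ) * A + Sh := by
    have h3Mh : 3 * Mh < Sh := by rw [hMhS]; linarith
    have : (M : ℝ) * Th < Sh := lt_of_le_of_lt hMTh h3Mh
    have hzA : z = A + Th := hTid.symm
    rw [hzA, mul_add]; linarith
  -- term bound
  have hterm : ∀ k ∈ Finset.range h,
      w N * ((N : ℝ)^2 * (((M : ℝ) + k) * w k)) ≤ (w k * w (M - k)) * (M : ℝ)^3 := by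
    intro k hk
    simp only [Finset.mem_range] at hk
    have hk1 : 1 ≤ M - k := by omega
    have hkM : M - k ≤ N := by omega
    have h1 : (N : ℝ)^2 * w N ≤ ((M - k : ℕ) : ℝ)^2 * w (M - k) := hrec _ hk1 hkM
    have h2 : ((M : ℝ) + k) * ((M - k : ℕ) : ℝ)^2 ≤ (M : ℝ)^3 := by
      have hkM' : (k : ℝ) ≤ (M : ℝ) := by exact_mod_cast (by omega : k ≤ M)
      have hk0 : (0:ℝ) ≤ (k : ℝ) := Nat.cast_nonneg k
      rw [Nat.cast_sub (by omega : k ≤ M)]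
      nlinarith [mul_nonneg (mul_nonneg hk0 (sub_nonneg.mpr hkM'))
          (by linarith : (0:ℝ) ≤ (M : ℝ) + k),
        mul_nonneg (mul_nonneg hk0 hk0) (by linarith : (0:ℝ) ≤ (M : ℝ))]
    have hwk := (hw k).le
    have hwMk := (hw (M - k)).le
    have hwN := (hw N).le
    have hMk0 : (0:ℝ) ≤ (M : ℝ) + k := by positivity
    nlinarith [mul_le_mul_of_nonneg_left h1 (mul_nonneg hMk0 hwk),
      mul_le_mul_of_nonneg_left h2 (mul_nonneg hwMk hwk)]
  have hsum : w N * ((N : ℝ)^2 * ((M : ℝ) * A + Sh))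
      ≤ (∑ k ∈ Finset.range h, w k * w (M - k)) * (M : ℝ)^3 := by
    have := Finset.sum_le_sum hterm
    calc w N * ((N : ℝ)^2 * ((M : ℝ) * A + Sh))
        = ∑ k ∈ Finset.range h, w N * ((N : ℝ)^2 * (((M : ℝ) + k) * w k)) := by
          simp only [hA, hSh, Finset.mul_sum, ← Finset.sum_add_distrib]
          exact Finset.sum_congr rfl fun k _ => by ring
      _ ≤ ∑ k ∈ Finset.range h, (w k * w (M - k)) * (M : ℝ)^3 := this
      _ = (∑ k ∈ Finset.range h, w k * w (M - k)) * (M : ℝ)^3 := by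
          rw [Finset.sum_mul]
  -- N² ≥ M²
  have hNM2 : w N * ((M : ℝ)^2 * ((M : ℝ) * A + Sh)) ≤ w N * ((N : ℝ)^2 * ((M : ℝ) * A + Sh)) := by
    have hMA : (0:ℝ) ≤ (M : ℝ) * A + Sh := by
      have hA0 : (0:ℝ) ≤ A := Finset.sum_nonneg fun k _ => (hw k).le
      have hSh0 : (0:ℝ) ≤ Sh := Finset.sum_nonneg fun k _ =>
        mul_nonneg (Nat.cast_nonneg _) (hw _).le
      exact add_nonneg (mul_nonneg (Nat.cast_nonneg M) hA0) hSh0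
    have hMN2 : (M : ℝ)^2 ≤ (N : ℝ)^2 := by
      have hle : (M : ℝ) ≤ N := by exact_mod_cast hMN
      nlinarith [(Nat.cast_nonneg M : (0:ℝ) ≤ (M : ℝ))]
    nlinarith [(hw N).le, mul_le_mul_of_nonneg_right hMN2 hMA]
  have hstrict : z * w N * (M : ℝ)^3 < w N * ((M : ℝ)^2 * ((M : ℝ) * A + Sh)) := by
    have hMpos : (0:ℝ) < (M : ℝ) := by exact_mod_cast Nat.lt_of_lt_of_le Nat.zero_lt_two hM2
    have hhint := mul_lt_mul_of_pos_left hkey (mul_pos (hw N) (pow_pos hMpos 2))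
    nlinarith [hhint]
  have hpair := pair_le_Ztwo w hw M
  have hM3 : (0:ℝ) < (M : ℝ)^3 := by
    have : (0:ℝ) < (M : ℝ) := by exact_mod_cast Nat.lt_of_lt_of_le Nat.zero_lt_two hM2
    positivity
  have : 2 * z * w N * (M : ℝ)^3 < Ztwo w M * (M : ℝ)^3 := by
    calc 2 * z * w N * (M : ℝ)^3 = 2 * (z * w N * (M : ℝ)^3) := by ring
      _ < 2 * (w N * ((N : ℝ)^2 * ((M : ℝ) * A + Sh))) := by
          have := lt_of_lt_of_le hstrict hNM2; linarith
      _ ≤ 2 * ((∑ k ∈ Finset.range h, w k * w (M - k)) * (M : ℝ)^3) := by linarith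
      _ = (2 * ∑ k ∈ Finset.range h, w k * w (M - k)) * (M : ℝ)^3 := by ring
      _ ≤ Ztwo w M * (M : ℝ)^3 := mul_le_mul_of_nonneg_right hpair hM3.le
  exact lt_of_mul_lt_mul_right this hM3.le

/-- For sub-exponential weights with finite first moment, there is a sequence
`N_ℓ → ∞` along which `Z_{2,N_ℓ - n}/w(N_ℓ) > 2 z(1)` for all `n ≤ N_ℓ`,
eventually in `ℓ`. -/
theorem Ztwo_ratio_above_limit (w : ℕ → ℝ) (hw : ∀ n, 0 < w n) (hw0 : w 0 = 1)
    (hz : Summable w)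
    (hreg : Tendsto (fun n => w n / w (n + 1)) atTop (𝓝 1))
    (hsub : Tendsto (fun N => Ztwo w N / w N) atTop (𝓝 (2 * ∑' n, w n)))
    (hmom : Summable fun n : ℕ => (n : ℝ) * w n)
    (hmompos : 0 < ∑' n : ℕ, (n : ℝ) * w n) :
    ∃ N : ℕ → ℕ, Tendsto N atTop atTop ∧
      ∃ ℓ₀ : ℕ, ∀ ℓ ≥ ℓ₀, ∀ n ≤ N ℓ,
        Ztwo w (N ℓ - n) / w (N ℓ) > 2 * ∑' n, w n := by
  classical
  set z := ∑' n, w n with hzdef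
  set S := ∑' n : ℕ, (n : ℝ) * w n with hSdef
  have hzpos : 0 < z := by
    have := Summable.le_tsum hz 0 (fun j _ => (hw j).le)
    rw [hw0] at this
    linarith
  -- record function
  choose f hf hfrec using exists_record w hw hmom
  set N : ℕ → ℕ := fun ℓ => f^[ℓ + 1] 0 with hN
  have hNsucc : ∀ ℓ, N ℓ = f (f^[ℓ] 0) := fun ℓ => Function.iterate_succ_apply' f ℓ 0
  have hNmono : StrictMono N := by
    refine strictMono_nat_of_lt_succ fun ℓ => ?_
    have : N (ℓ + 1) = f (N ℓ) := Function.iterate_succ_apply' f (ℓ + 1) 0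
    rw [this]
    exact hf (N ℓ)
  have hNtend : Tendsto N atTop atTop := hNmono.tendsto_atTop
  have hNrec : ∀ ℓ, ∀ n, 1 ≤ n → n ≤ N ℓ → (N ℓ : ℝ)^2 * w (N ℓ) ≤ (n : ℝ)^2 * w n := by
    intro ℓ
    rw [hNsucc ℓ]
    exact hfrec (f^[ℓ] 0)
  -- threshold h₀
  have hSev : ∀ᶠ h in atTop, 3 * S / 4 < ∑ k ∈ Finset.range h, (k : ℝ) * w k := by
    refine hmom.hasSum.tendsto_sum_nat.eventually (eventually_gt_nhds ?_)
    linarith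
  obtain ⟨h₀, hh₀⟩ := eventually_atTop.mp hSev
  set M₀ := 2 * h₀ + 2 with hM₀
  -- small M bound
  have hne : (Finset.range M₀).Nonempty := ⟨0, by simp [hM₀]⟩
  set c := (Finset.range M₀).inf' hne (Ztwo w) with hc
  have hcpos : 0 < c := by
    rw [hc, Finset.lt_inf'_iff]
    exact fun i _ => Ztwo_pos w hw i
  -- eventually small w (N ℓ)
  have hwN0 : Tendsto (fun ℓ => w (N ℓ)) atTop (𝓝 0) :=
    hz.tendsto_atTop_zero.comp hNtend
  have hev : ∀ᶠ ℓ in atTop, w (N ℓ) < c / (2 * z) :=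
    hwN0.eventually (eventually_lt_nhds (by positivity))
  obtain ⟨ℓ₀, hℓ₀⟩ := eventually_atTop.mp hev
  refine ⟨N, hNtend, ℓ₀, fun ℓ hℓ n hn => ?_⟩
  have hwNpos := hw (N ℓ)
  rw [gt_iff_lt, lt_div_iff₀ hwNpos]
  set M := N ℓ - n with hMdef
  by_cases hMlarge : M₀ ≤ M
  · exact core_lemma w hw hz hmom hh₀ hMlarge (by omega) (hNrec ℓ)
  · push_neg at hMlarge
    have h1 : c ≤ Ztwo w M := Finset.inf'_le _ (Finset.mem_range.mpr hMlarge)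
    have h2 : w (N ℓ) < c / (2 * z) := hℓ₀ ℓ hℓ
    have : 2 * z * w (N ℓ) < c := by
      rw [lt_div_iff₀ (by positivity)] at h2
      linarith [mul_comm (w (N ℓ)) (2 * z)]
    linarith
end

section
/- Let w : ℕ → (0,∞) satisfy w(n−1)/w(n) → φ_c ∈ (0,∞) and Σ_n w(n) φ_c^n = ∞. Then the conditional measure π_{2,N} on {(η₁,η₂) ∈ ℕ² : η₁+η₂=N} with π_{2,N}[η] ∝ w(η₁)w(η₂) does not exhibit condensation: it is not the case that lim_{K→∞} lim_{N→∞} π_{2,N}[max(η₁,η₂) ≥ N−K] = 1. -/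
open Filter Topology

/-- Probability under the two-site canonical measure that the maximum occupation
is at least `N - K`. -/
noncomputable def probMaxGe (w : ℕ → ℝ) (N K : ℕ) : ℝ :=
  (∑ p ∈ Finset.HasAntidiagonal.antidiagonal N, if N - K ≤ max p.1 p.2 then w p.1 * w p.2 else 0) /
    (∑ p ∈ Finset.HasAntidiagonal.antidiagonal N, w p.1 * w p.2)

private lemma div_div_div_same (a b c : ℝ) (hb : b ≠ 0) (hc : c ≠ 0) :
    (a / c) / (b / c) = a / b := by
  field_simp

private lemma ratio_tendsto (q : ℕ → ℝ) (hq : ∀ n, 0 < q n)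
    (h1 : Tendsto (fun n => q n / q (n + 1)) atTop (𝓝 1)) :
    ∀ j : ℕ, Tendsto (fun N => q (N - j) / q N) atTop (𝓝 1) := by
  intro j
  induction j with
  | zero =>
    exact tendsto_const_nhds.congr (fun N => (div_self (hq N).ne').symm)
  | succ j ih =>
    have h2 : Tendsto (fun N : ℕ => q (N - (j + 1)) / q (N - j)) atTop (𝓝 1) := by
      have hc : Tendsto (fun N : ℕ => N - (j + 1)) atTop atTop :=
        tendsto_sub_atTop_nat (j + 1)
      refine (h1.comp hc).congr' ?_
      filter_upwards [eventually_ge_atTop (j + 1)] with N hN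
      simp only [Function.comp]
      congr 2
      omega
    have hmul := h2.mul ih
    rw [one_mul] at hmul
    refine hmul.congr fun N => ?_
    rw [div_mul_div_comm, mul_comm (q (N - (j + 1))), mul_div_mul_left _ _ (hq (N - j)).ne']

private lemma no_cond_aux (q : ℕ → ℝ) (hq : ∀ n, 0 < q n)
    (h1 : Tendsto (fun n => q n / q (n + 1)) atTop (𝓝 1))
    (hdiv : ¬ Summable q) :
    ¬ ∃ a : ℕ → ℝ,
        (∀ K : ℕ, Tendsto (fun N => probMaxGe q N K) atTop (𝓝 (a K))) ∧
        Tendsto a atTop (𝓝 1) := by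
  rintro ⟨a, ha, hlim⟩
  set S : ℕ → ℝ := fun m => ∑ n ∈ Finset.range (m + 1), q n with hS
  set T : ℕ → ℕ → ℝ := fun m N => ∑ n ∈ Finset.range (m + 1), q n * q (N - n) with hT
  have hSpos : ∀ m, 0 < S m := fun m =>
    Finset.sum_pos (fun n _ => hq n) ⟨0, Finset.mem_range.mpr (Nat.succ_pos m)⟩
  have hTpos : ∀ m N, 0 < T m N := fun m N =>
    Finset.sum_pos (fun n _ => mul_pos (hq n) (hq (N - n)))
      ⟨0, Finset.mem_range.mpr (Nat.succ_pos m)⟩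
  -- T m N / q N → S m
  have hTlim : ∀ m, Tendsto (fun N => T m N / q N) atTop (𝓝 (S m)) := by
    intro m
    have : Tendsto (fun N => ∑ n ∈ Finset.range (m + 1), q n * (q (N - n) / q N)) atTop
        (𝓝 (∑ n ∈ Finset.range (m + 1), q n * 1)) := by
      refine tendsto_finset_sum _ fun n _ => ?_
      exact (ratio_tendsto q hq h1 n).const_mul (q n)
    simp only [mul_one] at this
    refine this.congr fun N => ?_
    rw [hT]
    simp only
    rw [Finset.sum_div]
    exact Finset.sum_congr rfl fun n _ => (mul_div_assoc _ _ _).symm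
  have hStop : Tendsto S atTop atTop := by
    have h := (not_summable_iff_tendsto_nat_atTop_of_nonneg (fun n => (hq n).le)).mp hdiv
    exact h.comp (tendsto_add_atTop_nat 1)
  -- main bound
  have hbound : ∀ K m N, K ≤ N → m ≤ N → probMaxGe q N K ≤ 2 * T K N / T m N := by
    intro K m N hKN hmN
    have hfilt : (Finset.range (N + 1)).filter (fun i => i ≤ K) = Finset.range (K + 1) := by
      ext i
      simp only [Finset.mem_filter, Finset.mem_range]
      omega
    have hA : (∑ i ∈ Finset.range (N + 1),
        if i ≤ K then q i * q (N - i) else 0) = T K N := by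
      rw [← Finset.sum_filter, hfilt, hT]
    have hB : (∑ i ∈ Finset.range (N + 1),
        if N - i ≤ K then q i * q (N - i) else 0) = T K N := by
      rw [← Finset.sum_range_reflect (fun i => if N - i ≤ K then q i * q (N - i) else 0) (N + 1)]
      rw [← hA]
      refine Finset.sum_congr rfl fun j hj => ?_
      have hjN : j ≤ N := Nat.lt_succ_iff.mp (Finset.mem_range.mp hj)
      have e1 : N + 1 - 1 - j = N - j := by omega
      have e2 : N - (N - j) = j := by omega
      rw [e1, e2, mul_comm]
    have hnum : (∑ i ∈ Finset.range (N + 1),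
        if N - K ≤ max i (N - i) then q i * q (N - i) else 0) ≤ 2 * T K N := by
      have step : (∑ i ∈ Finset.range (N + 1),
          if N - K ≤ max i (N - i) then q i * q (N - i) else 0) ≤
          ∑ i ∈ Finset.range (N + 1),
            ((if i ≤ K then q i * q (N - i) else 0) +
             (if N - i ≤ K then q i * q (N - i) else 0)) := by
        refine Finset.sum_le_sum fun i hi => ?_
        have hiN : i ≤ N := Nat.lt_succ_iff.mp (Finset.mem_range.mp hi)
        have hqq : 0 ≤ q i * q (N - i) := (mul_pos (hq i) (hq (N - i))).le
        by_cases h : N - K ≤ max i (N - i)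
        · have hdisj : i ≤ K ∨ N - i ≤ K := by
            rcases le_total i (N - i) with h' | h'
            · rw [max_eq_right h'] at h; left; omega
            · rw [max_eq_left h'] at h; right; omega
          rw [if_pos h]
          rcases hdisj with h' | h'
          · rw [if_pos h']
            have : (0:ℝ) ≤ if N - i ≤ K then q i * q (N - i) else 0 := by positivity
            linarith
          · rw [if_pos h']
            have : (0:ℝ) ≤ if i ≤ K then q i * q (N - i) else 0 := by positivity
            linarith
        · rw [if_neg h]
          positivity
      calc (∑ i ∈ Finset.range (N + 1),
            if N - K ≤ max i (N - i) then q i * q (N - i) else 0)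
          ≤ _ := step
        _ = T K N + T K N := by rw [Finset.sum_add_distrib, hA, hB]
        _ = 2 * T K N := by ring
    have hden : T m N ≤ T N N := by
      refine Finset.sum_le_sum_of_subset_of_nonneg
        (Finset.range_subset_range.mpr (by omega)) fun n _ _ => (mul_pos (hq n) (hq (N - n))).le
    rw [probMaxGe, Finset.Nat.sum_antidiagonal_eq_sum_range_succ_mk,
      Finset.Nat.sum_antidiagonal_eq_sum_range_succ_mk]
    have hTNN : (∑ k ∈ Finset.range (N + 1), q (k, N - k).1 * q (k, N - k).2) = T N N := rfl
    simp only [hTNN]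
    exact div_le_div₀ (by linarith [hTpos K N]) hnum (hTpos m N) hden
  -- each limit a K is ≤ 0
  have haK : ∀ K, a K ≤ 0 := by
    intro K
    have key : ∀ m, a K ≤ 2 * S K / S m := by
      intro m
      have hlimb : Tendsto (fun N => 2 * T K N / T m N) atTop (𝓝 (2 * S K / S m)) := by
        have hnum' : Tendsto (fun N => 2 * (T K N / q N)) atTop (𝓝 (2 * S K)) :=
          (hTlim K).const_mul 2
        have hfrac := hnum'.div (hTlim m) (hSpos m).ne'
        refine hfrac.congr fun N => ?_
        rw [Pi.div_apply, mul_div_assoc', div_div_div_same _ _ _ (hTpos m N).ne' (hq N).ne']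
      have hub : ∀ᶠ N in atTop, probMaxGe q N K ≤ 2 * T K N / T m N := by
        filter_upwards [eventually_ge_atTop K, eventually_ge_atTop m] with N h1' h2'
        exact hbound K m N h1' h2'
      exact le_of_tendsto_of_tendsto (ha K) hlimb hub
    have h0 : Tendsto (fun m => 2 * S K / S m) atTop (𝓝 0) :=
      Tendsto.div_atTop tendsto_const_nhds hStop
    exact ge_of_tendsto' h0 key
  have : (1:ℝ) ≤ 0 := le_of_tendsto' hlim haK
  linarith

/-- If `w(n-1)/w(n) → φ_c ∈ (0,∞)` but the critical partition function
`Σ w(n) φ_c^n` diverges, then the two-site system does not condense: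
it is not the case that `lim_{K→∞} lim_{N→∞} π_{2,N}[M₂ ≥ N-K] = 1`. -/
theorem no_condensation_of_z_diverges (w : ℕ → ℝ) (hw : ∀ n, 0 < w n)
    (φc : ℝ) (hφpos : 0 < φc)
    (hreg : Tendsto (fun n => w n / w (n + 1)) atTop (𝓝 φc))
    (hdiv : ¬ Summable fun n : ℕ => w n * φc ^ n) :
    ¬ ∃ a : ℕ → ℝ,
        (∀ K : ℕ, Tendsto (fun N => probMaxGe w N K) atTop (𝓝 (a K))) ∧
        Tendsto a atTop (𝓝 1) := by
  set q : ℕ → ℝ := fun n => w n * φc ^ n with hqdef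
  have hq : ∀ n, 0 < q n := fun n => mul_pos (hw n) (pow_pos hφpos n)
  have h1 : Tendsto (fun n => q n / q (n + 1)) atTop (𝓝 1) := by
    have h := hreg.div_const φc
    rw [div_self hφpos.ne'] at h
    refine h.congr fun n => ?_
    rw [hqdef]
    simp only
    rw [pow_succ]
    have hwn : w (n + 1) ≠ 0 := (hw (n + 1)).ne'
    have hp : (φc : ℝ) ^ n ≠ 0 := pow_ne_zero n hφpos.ne'
    field_simp
  have heq : ∀ N K, probMaxGe w N K = probMaxGe q N K := by
    intro N K
    have hn : (∑ p ∈ Finset.HasAntidiagonal.antidiagonal N, if N - K ≤ max p.1 p.2 then q p.1 * q p.2 else 0)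
        = φc ^ N * ∑ p ∈ Finset.HasAntidiagonal.antidiagonal N,
            if N - K ≤ max p.1 p.2 then w p.1 * w p.2 else 0 := by
      rw [Finset.mul_sum]
      refine Finset.sum_congr rfl fun p hp => ?_
      have hp' : p.1 + p.2 = N := Finset.HasAntidiagonal.mem_antidiagonal.mp hp
      by_cases h : N - K ≤ max p.1 p.2
      · rw [if_pos h, if_pos h, hqdef]
        simp only
        rw [← hp', pow_add]
        ring
      · rw [if_neg h, if_neg h, mul_zero]
    have hd : (∑ p ∈ Finset.HasAntidiagonal.antidiagonal N, q p.1 * q p.2)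
        = φc ^ N * ∑ p ∈ Finset.HasAntidiagonal.antidiagonal N, w p.1 * w p.2 := by
      rw [Finset.mul_sum]
      refine Finset.sum_congr rfl fun p hp => ?_
      have hp' : p.1 + p.2 = N := Finset.HasAntidiagonal.mem_antidiagonal.mp hp
      rw [hqdef]
      simp only
      rw [← hp', pow_add]
      ring
    rw [probMaxGe, probMaxGe, hn, hd, mul_div_mul_left _ _ (pow_ne_zero N hφpos.ne')]
  rintro ⟨a, ha, hlim⟩
  exact no_cond_aux q hq h1 hdiv
    ⟨a, fun K => (ha K).congr fun N => heq N K, hlim⟩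
end

section
/- Let w : ℕ → (0,∞) with w(n−1)/w(n) → 1, z(1) = Σ_n w(n) < ∞, and (w∗w)(N)/w(N) → 2z(1). Then for every L ≥ 2, the L-fold convolution satisfies w^{∗L}(N)/w(N) → L·z(1)^{L−1} as N → ∞. -/
open Filter Topology Finset

/-- `L`-fold convolution of the weights: `Z_{L,N} = Σ_{η ∈ ℕ^L, Ση = N} Π_x w(η_x)`. -/
noncomputable def Zconv (w : ℕ → ℝ) (L N : ℕ) : ℝ :=
  ∑ η ∈ Finset.Nat.antidiagonalTuple L N, ∏ x, w (η x)

lemma Zconv_one (w : ℕ → ℝ) (N : ℕ) : Zconv w 1 N = w N := by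
  simp [Zconv, Finset.Nat.antidiagonalTuple_one]

lemma Zconv_succ (w : ℕ → ℝ) (L N : ℕ) :
    Zconv w (L + 1) N = ∑ p ∈ Finset.HasAntidiagonal.antidiagonal N, w p.1 * Zconv w L p.2 := by
  classical
  rw [Zconv]
  have h : ∀ p ∈ Finset.HasAntidiagonal.antidiagonal N, w p.1 * Zconv w L p.2
      = ∑ η ∈ Finset.Nat.antidiagonalTuple L p.2,
          ∏ x : Fin (L+1), w ((Fin.cons p.1 η : Fin (L+1) → ℕ) x) := by
    intro p hp
    rw [Zconv, Finset.mul_sum]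
    refine Finset.sum_congr rfl fun η hη => ?_
    rw [Fin.prod_univ_succ]
    simp
  have hsig := Finset.sum_sigma (Finset.HasAntidiagonal.antidiagonal N)
    (fun p => Finset.Nat.antidiagonalTuple L p.2)
    (fun x => ∏ i : Fin (L+1), w ((Fin.cons x.1.1 x.2 : Fin (L+1) → ℕ) i))
  rw [Finset.sum_congr rfl h, ← hsig]
  refine (Finset.sum_nbij' (fun x => Fin.cons x.1.1 x.2)
    (fun η => ⟨(η 0, ∑ x : Fin L, η x.succ), fun x => η x.succ⟩) ?_ ?_ ?_ ?_ ?_).symm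
  · rintro ⟨⟨i, j⟩, η⟩ hx
    simp only [Finset.mem_sigma, Finset.HasAntidiagonal.mem_antidiagonal,
      Finset.Nat.mem_antidiagonalTuple] at hx ⊢
    rw [Fin.sum_univ_succ]
    simp only [Fin.cons_zero, Fin.cons_succ]
    rw [hx.2]; exact hx.1
  · intro η hη
    simp only [Finset.Nat.mem_antidiagonalTuple] at hη
    simp only [Finset.mem_sigma, Finset.HasAntidiagonal.mem_antidiagonal, Finset.Nat.mem_antidiagonalTuple]
    exact ⟨by rw [← hη, Fin.sum_univ_succ], trivial⟩
  · rintro ⟨⟨i, j⟩, η⟩ hx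
    simp only [Finset.mem_sigma, Finset.HasAntidiagonal.mem_antidiagonal,
      Finset.Nat.mem_antidiagonalTuple] at hx
    simp only [Fin.cons_zero, Fin.cons_succ]
    exact Sigma.ext (by simp [Prod.ext_iff, hx.2]) (by simp)
  · intro η hη
    exact Fin.cons_self_tail η
  · rintro ⟨⟨i, j⟩, η⟩ hx
    rfl

lemma Zconv_nonneg (w : ℕ → ℝ) (hw : ∀ n, 0 ≤ w n) (L N : ℕ) : 0 ≤ Zconv w L N :=
  Finset.sum_nonneg fun η _ => Finset.prod_nonneg fun x _ => hw _

lemma Zconv_range (w : ℕ → ℝ) (L N : ℕ) :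
    Zconv w (L + 1) N = ∑ k ∈ Finset.range (N + 1), w k * Zconv w L (N - k) := by
  rw [Zconv_succ, Finset.Nat.sum_antidiagonal_eq_sum_range_succ_mk]

lemma Zconv_summable (w : ℕ → ℝ) (hw : ∀ n, 0 ≤ w n) (hz : Summable w) :
    ∀ L, 1 ≤ L → Summable (fun N => Zconv w L N) ∧
      (∑' N, Zconv w L N) = (∑' n, w n) ^ L := by
  intro L hL
  induction L, hL using Nat.le_induction with
  | base => simpa [Zconv_one] using hz
  | succ L hL ih =>
    have hwn : Summable fun n => ‖w n‖ := hz.abs.congr fun n => (Real.norm_eq_abs _).symm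
    have hZn : Summable fun n => ‖Zconv w L n‖ :=
      ih.1.abs.congr fun n => (Real.norm_eq_abs _).symm
    constructor
    · exact (summable_norm_sum_mul_antidiagonal_of_summable_norm hwn hZn).of_norm.congr
        fun N => (Zconv_succ w L N).symm
    · calc (∑' N, Zconv w (L + 1) N)
          = ∑' N, ∑ kl ∈ Finset.HasAntidiagonal.antidiagonal N, w kl.1 * Zconv w L kl.2 :=
            tsum_congr fun N => Zconv_succ w L N
        _ = (∑' n, w n) * ∑' n, Zconv w L n :=
            (tsum_mul_tsum_eq_tsum_sum_antidiagonal_of_summable_norm hwn hZn).symm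
        _ = (∑' n, w n) ^ (L + 1) := by rw [ih.2, pow_succ, mul_comm]

lemma div_chain (a b c : ℝ) (hb : b ≠ 0) (hc : c ≠ 0) : a / b * (b / c) = a / c := by
  field_simp

section Analytic

variable {w : ℕ → ℝ} (hw : ∀ n, 0 < w n)
  (hreg : Tendsto (fun n => w n / w (n + 1)) atTop (𝓝 1))

/-- `w(N-j)/w(N) → 1` for every fixed `j`. -/
lemma ratio_shift (hw : ∀ n, 0 < w n)
    (hreg : Tendsto (fun n => w n / w (n + 1)) atTop (𝓝 1)) (j : ℕ) :
    Tendsto (fun N => w (N - j) / w N) atTop (𝓝 1) := by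
  induction j with
  | zero =>
    have : (fun N => w (N - 0) / w N) = fun _ => (1 : ℝ) := by
      funext N; simp [div_self (hw N).ne']
    rw [this]; exact tendsto_const_nhds
  | succ j ih =>
    have h1 : Tendsto (fun N => w (N - (j + 1)) / w (N - j)) atTop (𝓝 1) := by
      have hcomp := hreg.comp (tendsto_sub_atTop_nat (j + 1))
      refine hcomp.congr' ?_
      filter_upwards [eventually_ge_atTop (j + 1)] with N hN
      have : N - (j + 1) + 1 = N - j := by omega
      simp only [Function.comp]
      rw [this]
    have := h1.mul ih
    rw [mul_one] at this
    refine this.congr' ?_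
    filter_upwards [eventually_ge_atTop (j + 1)] with N hN
    exact div_chain _ _ _ (hw _).ne' (hw N).ne'

/-- Limit of the head part of the convolution. -/
lemma head_limit (hw : ∀ n, 0 < w n)
    (hreg : Tendsto (fun n => w n / w (n + 1)) atTop (𝓝 1))
    (f : ℕ → ℝ) (c : ℝ) (hc : Tendsto (fun N => f N / w N) atTop (𝓝 c)) (m : ℕ) :
    Tendsto (fun N => (∑ k ∈ Finset.range (m + 1), w k * f (N - k)) / w N) atTop
      (𝓝 (c * ∑ k ∈ Finset.range (m + 1), w k)) := by
  have heq : ∀ N, (∑ k ∈ Finset.range (m + 1), w k * f (N - k)) / w N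
      = ∑ k ∈ Finset.range (m + 1), w k * (f (N - k) / w N) := by
    intro N; rw [Finset.sum_div]; exact Finset.sum_congr rfl fun k _ => mul_div_assoc _ _ _
  simp only [heq]
  have : (c * ∑ k ∈ Finset.range (m + 1), w k)
      = ∑ k ∈ Finset.range (m + 1), w k * (c * 1) := by
    rw [Finset.mul_sum]; exact Finset.sum_congr rfl fun k _ => by ring
  rw [this]
  refine tendsto_finset_sum _ fun k _ => Tendsto.const_mul _ ?_
  have h1 : Tendsto (fun N => f (N - k) / w (N - k)) atTop (𝓝 c) :=
    hc.comp (tendsto_sub_atTop_nat k)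
  have h2 := ratio_shift hw hreg k
  have := h1.mul h2
  refine this.congr fun N => ?_
  exact div_chain _ _ _ (hw _).ne' (hw N).ne'

/-- Limit of the tail part of the convolution. -/
lemma tail_limit (hw : ∀ n, 0 < w n)
    (hreg : Tendsto (fun n => w n / w (n + 1)) atTop (𝓝 1))
    (f : ℕ → ℝ) (m : ℕ) :
    Tendsto (fun N => (∑ j ∈ Finset.range (m + 1), w (N - j) * f j) / w N) atTop
      (𝓝 (∑ j ∈ Finset.range (m + 1), f j)) := by
  have heq : ∀ N, (∑ j ∈ Finset.range (m + 1), w (N - j) * f j) / w N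
      = ∑ j ∈ Finset.range (m + 1), (w (N - j) / w N) * f j := by
    intro N; rw [Finset.sum_div]
    exact Finset.sum_congr rfl fun j _ => by ring
  simp only [heq]
  have : (∑ j ∈ Finset.range (m + 1), f j)
      = ∑ j ∈ Finset.range (m + 1), (1 : ℝ) * f j := by
    exact Finset.sum_congr rfl fun j _ => (one_mul _).symm
  rw [this]
  exact tendsto_finset_sum _ fun j _ => (ratio_shift hw hreg j).mul_const _

/-- Three-way decomposition of the convolution sum. -/
lemma conv_decomp (w f : ℕ → ℝ) (m N : ℕ) (hN : 2 * m + 2 ≤ N) :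
    ∑ k ∈ Finset.range (N + 1), w k * f (N - k)
      = (∑ k ∈ Finset.range (m + 1), w k * f (N - k))
        + (∑ k ∈ Finset.Ico (m + 1) (N - m), w k * f (N - k))
        + (∑ j ∈ Finset.range (m + 1), w (N - j) * f j) := by
  have h1 : m + 1 ≤ N - m := by omega
  have h2 : N - m ≤ N + 1 := by omega
  have e0 : Finset.range (N + 1) = Finset.Ico 0 (N + 1) := by
    rw [Finset.range_eq_Ico]
  have e1 : Finset.range (m + 1) = Finset.Ico 0 (m + 1) := by
    rw [Finset.range_eq_Ico]
  rw [e0, e1, ← Finset.sum_Ico_consecutive _ (Nat.zero_le (m+1)) (le_trans h1 h2),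
    ← Finset.sum_Ico_consecutive _ h1 h2, add_assoc]
  congr 1
  congr 1
  refine Finset.sum_nbij' (fun k => N - k) (fun j => N - j) ?_ ?_ ?_ ?_ ?_
  · intro k hk; simp only [Finset.mem_Ico] at hk ⊢; omega
  · intro j hj; simp only [Finset.mem_Ico, Finset.mem_range] at hj ⊢; omega
  · intro k hk; simp only [Finset.mem_Ico, Finset.mem_range] at hk; beta_reduce; omega
  · intro j hj; simp only [Finset.mem_Ico, Finset.mem_range] at hj; beta_reduce; omega
  · intro k hk; simp only [Finset.mem_Ico] at hk
    have : N - (N - k) = k := by omega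
    rw [this]

end Analytic

/-- Key step: convolving with a function `f` with `f/w → c`. -/
lemma key_step (w f : ℕ → ℝ) (hw : ∀ n, 0 < w n)
    (hreg : Tendsto (fun n => w n / w (n + 1)) atTop (𝓝 1))
    (hz : Summable w)
    (hsub2 : Tendsto (fun N => (∑ k ∈ Finset.range (N + 1), w k * w (N - k)) / w N)
      atTop (𝓝 (2 * ∑' n, w n)))
    (hf0 : ∀ n, 0 ≤ f n) (hfs : Summable f) (c : ℝ)
    (hc : Tendsto (fun N => f N / w N) atTop (𝓝 c)) :
    Tendsto (fun N => (∑ k ∈ Finset.range (N + 1), w k * f (N - k)) / w N)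
      atTop (𝓝 (c * (∑' n, w n) + ∑' n, f n)) := by
  set z := ∑' n, w n with hzdef
  set s := ∑' n, f n with hsdef
  -- a uniform bound f ≤ C w
  obtain ⟨C0, hC0⟩ := hc.bddAbove_range
  set C := max C0 1 with hCdef
  have hC1 : (1 : ℝ) ≤ C := le_max_right _ _
  have hCpos : (0 : ℝ) < C := lt_of_lt_of_le one_pos hC1
  have hfC : ∀ n, f n ≤ C * w n := by
    intro n
    have h := hC0 (Set.mem_range_self n)
    have h2 : f n / w n ≤ C := le_trans h (le_max_left _ _)
    calc f n = f n / w n * w n := (div_mul_cancel₀ _ (hw n).ne').symm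
      _ ≤ C * w n := mul_le_mul_of_nonneg_right h2 (hw n).le
  rw [Metric.tendsto_nhds]
  intro ε hε
  have h8 : (0 : ℝ) < ε / 8 := by positivity
  -- partial sums converge
  have hSw : Tendsto (fun m => ∑ k ∈ Finset.range (m + 1), w k) atTop (𝓝 z) :=
    hz.hasSum.tendsto_sum_nat.comp (tendsto_add_atTop_nat 1)
  have hSf : Tendsto (fun m => ∑ k ∈ Finset.range (m + 1), f k) atTop (𝓝 s) :=
    hfs.hasSum.tendsto_sum_nat.comp (tendsto_add_atTop_nat 1)
  have t1 : Tendsto (fun m => |c| * (z - ∑ k ∈ Finset.range (m + 1), w k)) atTop (𝓝 0) := by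
    have := (tendsto_const_nhds (x := z)).sub hSw
    rw [sub_self] at this
    simpa using this.const_mul |c|
  have t2 : Tendsto (fun m => s - ∑ k ∈ Finset.range (m + 1), f k) atTop (𝓝 0) := by
    have := (tendsto_const_nhds (x := s)).sub hSf
    rwa [sub_self] at this
  have t3 : Tendsto (fun m => 2 * C * (z - ∑ k ∈ Finset.range (m + 1), w k)) atTop (𝓝 0) := by
    have := (tendsto_const_nhds (x := z)).sub hSw
    rw [sub_self] at this
    simpa using this.const_mul (2 * C)
  obtain ⟨m, hm1, hm2, hm3⟩ :=
    ((t1.eventually_lt_const h8).and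
      ((t2.eventually_lt_const h8).and (t3.eventually_lt_const h8))).exists
  set Sw := ∑ k ∈ Finset.range (m + 1), w k with hSwdef
  set Sf := ∑ k ∈ Finset.range (m + 1), f k with hSfdef
  have tw0 : 0 ≤ z - Sw := by
    have := Summable.sum_le_tsum (Finset.range (m + 1)) (fun n _ => (hw n).le) hz
    linarith
  have tf0 : 0 ≤ s - Sf := by
    have := Summable.sum_le_tsum (Finset.range (m + 1)) (fun n _ => hf0 n) hfs
    linarith
  set δ := ε / (16 * C) with hδdef
  have hδpos : 0 < δ := by positivity
  have hCδ : C * δ = ε / 16 := by rw [hδdef]; field_simp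
  -- eventual estimates
  have hone : Tendsto (fun N => w N / w N) atTop (𝓝 1) := by
    have : (fun N => w N / w N) = fun _ => (1 : ℝ) := by
      funext N; exact div_self (hw N).ne'
    rw [this]; exact tendsto_const_nhds
  have E1 := (Metric.tendsto_nhds.mp (head_limit hw hreg f c hc m)) (ε / 8) h8
  have E2 := (Metric.tendsto_nhds.mp (tail_limit hw hreg f m)) (ε / 8) h8
  have hmidT : Tendsto (fun N =>
      (∑ k ∈ Finset.range (N + 1), w k * w (N - k)) / w N
      - (∑ k ∈ Finset.range (m + 1), w k * w (N - k)) / w N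
      - (∑ j ∈ Finset.range (m + 1), w (N - j) * w j) / w N) atTop
      (𝓝 (2 * z - 1 * Sw - Sw)) :=
    (hsub2.sub (head_limit hw hreg w 1 hone m)).sub (tail_limit hw hreg w m)
  have E3 := (Metric.tendsto_nhds.mp hmidT) δ hδpos
  filter_upwards [E1, E2, E3, eventually_ge_atTop (2 * m + 2)] with N h1 h2 h3 h4
  -- decompositions
  have d := conv_decomp w f m N h4
  have dw := conv_decomp w w m N h4
  set A := (∑ k ∈ Finset.range (m + 1), w k * f (N - k)) / w N with hA
  set M := (∑ k ∈ Finset.Ico (m + 1) (N - m), w k * f (N - k)) / w N with hM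
  set B := (∑ j ∈ Finset.range (m + 1), w (N - j) * f j) / w N with hB
  have hg : (∑ k ∈ Finset.range (N + 1), w k * f (N - k)) / w N = A + M + B := by
    rw [d, hA, hM, hB]; ring
  set Mw := (∑ k ∈ Finset.Ico (m + 1) (N - m), w k * w (N - k)) / w N with hMw
  have hgw : (∑ k ∈ Finset.range (N + 1), w k * w (N - k)) / w N
      - (∑ k ∈ Finset.range (m + 1), w k * w (N - k)) / w N
      - (∑ j ∈ Finset.range (m + 1), w (N - j) * w j) / w N = Mw := by
    rw [dw, hMw]; ring
  rw [hgw] at h3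
  rw [Real.dist_eq] at h3
  have hMwlt : Mw < 2 * (z - Sw) + δ := by
    have := (abs_lt.mp h3).2
    linarith
  have hM0 : 0 ≤ M := by
    apply div_nonneg _ (hw N).le
    exact Finset.sum_nonneg fun k _ => mul_nonneg (hw k).le (hf0 _)
  have hMle : M ≤ C * Mw := by
    rw [hM, hMw, ← mul_div_assoc]
    refine (div_le_div_iff_of_pos_right (hw N)).2 ?_
    rw [Finset.mul_sum]
    refine Finset.sum_le_sum fun k _ => ?_
    calc w k * f (N - k) ≤ w k * (C * w (N - k)) :=
        mul_le_mul_of_nonneg_left (hfC _) (hw k).le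
      _ = C * (w k * w (N - k)) := by ring
  have hMlt : M < ε / 8 + ε / 16 := by
    have hlt : C * Mw < C * (2 * (z - Sw) + δ) := (mul_lt_mul_iff_right₀ hCpos).2 hMwlt
    nlinarith [hMle, hm3, hCδ]
  rw [Real.dist_eq, hg]
  rw [Real.dist_eq] at h1 h2
  have hb1 := abs_lt.mp h1
  have hb2 := abs_lt.mp h2
  have hcz : |c * (z - Sw)| < ε / 8 := by rw [abs_mul, abs_of_nonneg tw0]; exact hm1
  have hb3 := abs_lt.mp hcz
  have hring : c * z = c * Sw + c * (z - Sw) := by ring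
  rw [abs_lt]
  constructor <;> linarith

/-- If `w(n-1)/w(n) → 1`, `z(1) = Σ w(n) < ∞` and `(w∗w)(N)/w(N) → 2 z(1)`, then for
every `L ≥ 2` the `L`-fold convolution satisfies `w^{∗L}(N)/w(N) → L z(1)^{L-1}`. -/
theorem conv_ratio_limit_all_L (w : ℕ → ℝ) (hw : ∀ n, 0 < w n)
    (hreg : Tendsto (fun n => w n / w (n + 1)) atTop (𝓝 1))
    (hz : Summable w)
    (hsub : Tendsto (fun N => Zconv w 2 N / w N) atTop (𝓝 (2 * ∑' n, w n))) :
    ∀ L : ℕ, 2 ≤ L →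
      Tendsto (fun N => Zconv w L N / w N) atTop
        (𝓝 ((L : ℝ) * (∑' n, w n) ^ (L - 1))) := by
  intro L hL
  have hw0 : ∀ n, (0 : ℝ) ≤ w n := fun n => (hw n).le
  have hsub' : Tendsto (fun N => (∑ k ∈ Finset.range (N + 1), w k * w (N - k)) / w N)
      atTop (𝓝 (2 * ∑' n, w n)) := by
    refine hsub.congr fun N => ?_
    rw [show (2 : ℕ) = 1 + 1 from rfl, Zconv_range]
    simp [Zconv_one]
  induction L, hL using Nat.le_induction with
  | base => simpa using hsub
  | succ L hL ih =>
    have hZs := Zconv_summable w hw0 hz L (by omega)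
    have hkey := key_step w (Zconv w L) hw hreg hz hsub' (Zconv_nonneg w hw0 L) hZs.1
      ((L : ℝ) * (∑' n, w n) ^ (L - 1)) ih
    have hval : (L : ℝ) * (∑' n, w n) ^ (L - 1) * (∑' n, w n) + ∑' n, Zconv w L n
        = ((L + 1 : ℕ) : ℝ) * (∑' n, w n) ^ (L + 1 - 1) := by
      have h1 : L - 1 + 1 = L := by omega
      have h2 : L + 1 - 1 = L := by omega
      have h3 : (∑' n, w n) ^ (L - 1) * (∑' n, w n) = (∑' n, w n) ^ L := by
        rw [← pow_succ, h1]
      rw [h2, hZs.2, mul_assoc, h3]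
      push_cast
      ring
    rw [hval] at hkey
    refine hkey.congr fun N => ?_
    rw [Zconv_range w L N]
end

section
/- Let w satisfy w(n−1)/w(n) → φ_c < ∞, z(φ_c) < ∞, and Z_{L,N}/w(N) → L z(φ_c)^{L−1} as N → ∞. Then, conditioned on the maximum being at site L, the distribution of the remaining sites converges pointwise to the critical product measure: for all fixed n₁,…,n_{L−1}, π_{L,N}[η₁=n₁,…,η_{L−1}=n_{L−1} | M_L = η_L] → Π_{i=1}^{L−1} w(n_i) φ_c^{n_i}/z(φ_c) as N → ∞. -/
open Filter Topology

/-- Given the maximum is attained at the last site (site `L` of `L = K+1` sites), the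
conditional probability that the remaining sites take values `n₁,…,n_{L-1}`. -/
noncomputable def condBulkProb (w : ℕ → ℝ) (K : ℕ) (n : Fin K → ℕ) (N : ℕ) : ℝ :=
  (∑ η ∈ Finset.Nat.antidiagonalTuple (K + 1) N,
      if (∀ i : Fin K, η i.castSucc = n i) ∧ (∀ x, η x ≤ η (Fin.last K)) then
        ∏ x, w (η x) else 0) /
  (∑ η ∈ Finset.Nat.antidiagonalTuple (K + 1) N,
      if (∀ x, η x ≤ η (Fin.last K)) then ∏ x, w (η x) else 0)

section Aux
open Finset

lemma snoc_sum {K : ℕ} (m : Fin K → ℕ) (t : ℕ) :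
    ∑ x, (Fin.snoc m t : Fin (K+1) → ℕ) x = (∑ i, m i) + t := by
  rw [Fin.sum_univ_castSucc]; simp

lemma snoc_prod (w : ℕ → ℝ) {K : ℕ} (m : Fin K → ℕ) (t : ℕ) :
    ∏ x, w ((Fin.snoc m t : Fin (K+1) → ℕ) x) = (∏ i, w (m i)) * w t := by
  rw [Fin.prod_univ_castSucc]; simp

noncomputable def Gbox (w : ℕ → ℝ) (K R N : ℕ) : ℝ :=
  ∑ m ∈ Fintype.piFinset (fun _ : Fin K => Finset.range (R+1)),
    (∏ i, w (m i)) * w (N - ∑ i, m i)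

def gmap (K N : ℕ) (i : Fin (K+1)) (m : Fin K → ℕ) : Fin (K+1) → ℕ :=
  fun y => (Fin.snoc m (N - ∑ j, m j) : Fin (K+1) → ℕ) (Equiv.swap i (Fin.last K) y)

lemma gmap_sum {K N : ℕ} (i : Fin (K+1)) (m : Fin K → ℕ) (h : ∑ j, m j ≤ N) :
    ∑ y, gmap K N i m y = N := by
  unfold gmap
  rw [Equiv.sum_comp (Equiv.swap i (Fin.last K))
    (Fin.snoc m (N - ∑ j, m j) : Fin (K+1) → ℕ), snoc_sum]
  omega

lemma gmap_prod (w : ℕ → ℝ) {K N : ℕ} (i : Fin (K+1)) (m : Fin K → ℕ) :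
    ∏ y, w (gmap K N i m y) = (∏ j, w (m j)) * w (N - ∑ j, m j) := by
  unfold gmap
  rw [Equiv.prod_comp (Equiv.swap i (Fin.last K))
    (fun y => w ((Fin.snoc m (N - ∑ j, m j) : Fin (K+1) → ℕ) y))]
  exact snoc_prod w m _

lemma gmap_self {K N : ℕ} (i : Fin (K+1)) (m : Fin K → ℕ) :
    gmap K N i m i = N - ∑ j, m j := by
  unfold gmap
  rw [Equiv.swap_apply_left]
  simp

lemma gmap_ne {K N R : ℕ} (i : Fin (K+1)) (m : Fin K → ℕ) (hm : ∀ j, m j ≤ R)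
    {y : Fin (K+1)} (hy : y ≠ i) : gmap K N i m y ≤ R := by
  unfold gmap
  have hsw : Equiv.swap i (Fin.last K) y ≠ Fin.last K := by
    rcases eq_or_ne y (Fin.last K) with rfl | hyl
    · rw [Equiv.swap_apply_right]; exact Ne.symm hy
    · rw [Equiv.swap_apply_of_ne_of_ne hy hyl]; exact hyl
  obtain ⟨j, hj⟩ := Fin.exists_castSucc_eq.2 hsw
  rw [← hj, Fin.snoc_castSucc]
  exact hm j

lemma gmap_inj {K N : ℕ} (i : Fin (K+1)) {m m' : Fin K → ℕ}
    (h : gmap K N i m = gmap K N i m') : m = m' := by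
  funext j
  have := congrFun h (Equiv.swap i (Fin.last K) j.castSucc)
  unfold gmap at this
  simpa using this

noncomputable def Dden (w : ℕ → ℝ) (K N : ℕ) : ℝ :=
  ∑ η ∈ Finset.Nat.antidiagonalTuple (K + 1) N,
      if (∀ x, η x ≤ η (Fin.last K)) then ∏ x, w (η x) else 0

local notation "box" K:max R:max => Fintype.piFinset (fun _ : Fin K => Finset.range (R+1))

lemma sum_box_le {K R : ℕ} {m : Fin K → ℕ} (hm : m ∈ box K R) : ∑ j, m j ≤ K * R := by
  have : ∀ j, m j ≤ R := by
    intro j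
    have := (Fintype.mem_piFinset.1 hm) j
    simpa [Nat.lt_succ_iff] using this
  calc ∑ j, m j ≤ ∑ _j : Fin K, R := Finset.sum_le_sum (fun j _ => this j)
  _ = K * R := by simp [mul_comm]

lemma mem_box_le {K R : ℕ} {m : Fin K → ℕ} (hm : m ∈ box K R) : ∀ j, m j ≤ R := by
  intro j
  have := (Fintype.mem_piFinset.1 hm) j
  simpa [Nat.lt_succ_iff] using this

/-- the image characterization -/
lemma gmap_image_spec {K R N : ℕ} (hN : (K+1) * R < N) (i : Fin (K+1)) {η : Fin (K+1) → ℕ}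
    (hη : η ∈ (box K R).image (gmap K N i)) :
    R < η i ∧ ∀ y, y ≠ i → η y ≤ R := by
  obtain ⟨m, hm, rfl⟩ := Finset.mem_image.1 hη
  constructor
  · rw [gmap_self]
    have h1 := sum_box_le hm
    have h2 : (K+1)*R = K*R + R := by ring
    omega
  · intro y hy
    exact gmap_ne i m (mem_box_le hm) hy

/-- sum of the indicator of the image equals Gbox -/
lemma sum_F_eq {K R N : ℕ} (w : ℕ → ℝ) (hN : ∑ _j : Fin K, R ≤ N) (i : Fin (K+1)) :
    ∑ η ∈ Finset.Nat.antidiagonalTuple (K + 1) N,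
      (if η ∈ (box K R).image (gmap K N i) then ∏ x, w (η x) else 0) = Gbox w K R N := by
  rw [Finset.sum_ite_mem]
  have hsub : (box K R).image (gmap K N i) ⊆ Finset.Nat.antidiagonalTuple (K + 1) N := by
    intro η hη
    obtain ⟨m, hm, rfl⟩ := Finset.mem_image.1 hη
    rw [Finset.Nat.mem_antidiagonalTuple]
    refine gmap_sum i m ?_
    calc ∑ j, m j ≤ ∑ _j : Fin K, R := Finset.sum_le_sum (fun j _ => mem_box_le hm j)
    _ ≤ N := hN
  rw [Finset.inter_eq_right.2 hsub]
  rw [Finset.sum_image (fun m hm m' hm' h => gmap_inj i h)]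
  unfold Gbox
  exact Finset.sum_congr rfl (fun m _ => gmap_prod w i m)

lemma G_le_D {K R N : ℕ} (w : ℕ → ℝ) (hw : ∀ n, 0 < w n) (hN : (K+1) * R < N) :
    Gbox w K R N ≤ Dden w K N := by
  have hN' : ∑ _j : Fin K, R ≤ N := by
    simp only [Finset.sum_const, card_univ, Fintype.card_fin, smul_eq_mul]
    nlinarith
  rw [← sum_F_eq w hN' (Fin.last K)]
  unfold Dden
  refine Finset.sum_le_sum (fun η hη => ?_)
  by_cases h : η ∈ (box K R).image (gmap K N (Fin.last K))
  · rw [if_pos h, if_pos]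
    intro x
    rcases eq_or_ne x (Fin.last K) with rfl | hx
    · exact le_refl _
    · obtain ⟨h1, h2⟩ := gmap_image_spec hN (Fin.last K) h
      exact le_trans (h2 x hx) (le_of_lt h1)
  · rw [if_neg h]
    split
    · exact Finset.prod_nonneg (fun x _ => (hw _).le)
    · exact le_refl _

lemma D_add_G_le_Z {K R N : ℕ} (w : ℕ → ℝ) (hw : ∀ n, 0 < w n) (hN : (K+1) * R < N) :
    Dden w K N + K * Gbox w K R N ≤ Zconv w (K+1) N := by
  have hN' : ∑ _j : Fin K, R ≤ N := by
    simp only [Finset.sum_const, card_univ, Fintype.card_fin, smul_eq_mul]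
    nlinarith
  have key : ∀ η ∈ Finset.Nat.antidiagonalTuple (K + 1) N,
      (if (∀ x, η x ≤ η (Fin.last K)) then ∏ x, w (η x) else 0)
      + ∑ i : Fin K, (if η ∈ (box K R).image (gmap K N i.castSucc) then ∏ x, w (η x) else 0)
      ≤ ∏ x, w (η x) := by
    intro η _
    have hP : (0:ℝ) ≤ ∏ x, w (η x) := Finset.prod_nonneg (fun x _ => (hw _).le)
    by_cases hex : ∃ i : Fin K, η ∈ (box K R).image (gmap K N i.castSucc)
    · obtain ⟨i, hi⟩ := hex
      obtain ⟨h1, h2⟩ := gmap_image_spec hN i.castSucc hi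
      have hmaxfail : ¬ (∀ x, η x ≤ η (Fin.last K)) := by
        intro hmax
        have hlast : η (Fin.last K) ≤ R := h2 (Fin.last K) (Fin.castSucc_lt_last i).ne'
        have := hmax i.castSucc
        omega
      rw [if_neg hmaxfail, zero_add]
      rw [Finset.sum_eq_single i]
      · rw [if_pos hi]
      · intro j _ hji
        rw [if_neg]
        intro hj
        obtain ⟨h1', h2'⟩ := gmap_image_spec hN j.castSucc hj
        have := h2 j.castSucc (by
          simp only [ne_eq, Fin.castSucc_inj]
          exact hji)
        omega
      · intro h; exact absurd (Finset.mem_univ i) h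
    · push_neg at hex
      have : ∑ i : Fin K, (if η ∈ (box K R).image (gmap K N i.castSucc) then ∏ x, w (η x) else 0) = 0 := by
        refine Finset.sum_eq_zero (fun i _ => if_neg (hex i))
      rw [this, add_zero]
      split
      · exact le_refl _
      · exact hP
  calc Dden w K N + K * Gbox w K R N
      = ∑ η ∈ Finset.Nat.antidiagonalTuple (K + 1) N,
        ((if (∀ x, η x ≤ η (Fin.last K)) then ∏ x, w (η x) else 0)
        + ∑ i : Fin K, (if η ∈ (box K R).image (gmap K N i.castSucc) then ∏ x, w (η x) else 0)) := by
        rw [Finset.sum_add_distrib, Finset.sum_comm]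
        unfold Dden
        congr 1
        rw [Finset.sum_congr rfl (fun i _ => sum_F_eq w hN' i.castSucc)]
        simp [mul_comm]
    _ ≤ ∑ η ∈ Finset.Nat.antidiagonalTuple (K + 1) N, ∏ x, w (η x) := Finset.sum_le_sum key
    _ = Zconv w (K+1) N := rfl

lemma ratio_tendsto_s10 (w : ℕ → ℝ) (hw : ∀ n, 0 < w n) (φc : ℝ)
    (hreg : Tendsto (fun n => w n / w (n + 1)) atTop (𝓝 φc)) (S : ℕ) :
    Tendsto (fun N => w (N - S) / w N) atTop (𝓝 (φc ^ S)) := by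
  induction S with
  | zero =>
    simp only [Nat.sub_zero, pow_zero]
    have : (fun N => w N / w N) = fun _ => (1:ℝ) := by
      funext N; exact div_self (hw N).ne'
    rw [this]; exact tendsto_const_nhds
  | succ S ih =>
    have h1 : Tendsto (fun N => w (N - (S+1)) / w (N - S)) atTop (𝓝 φc) := by
      have h2 := hreg.comp (tendsto_sub_atTop_nat (S+1))
      refine h2.congr' ?_
      filter_upwards [eventually_ge_atTop (S+1)] with N hN
      have : N - (S+1) + 1 = N - S := by omega
      simp [Function.comp, this]
    have h3 := h1.mul ih
    rw [show φc * φc ^ S = φc ^ (S+1) by ring] at h3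
    refine h3.congr ?_
    intro N
    rw [div_mul_div_comm, mul_comm (w (N - S)) (w N), mul_div_mul_right _ _ (hw (N-S)).ne']

lemma Gbox_tendsto (w : ℕ → ℝ) (hw : ∀ n, 0 < w n) (φc : ℝ)
    (hreg : Tendsto (fun n => w n / w (n + 1)) atTop (𝓝 φc)) (K R : ℕ) :
    Tendsto (fun N => Gbox w K R N / w N) atTop
      (𝓝 ((∑ j ∈ Finset.range (R+1), w j * φc ^ j) ^ K)) := by
  have heq : ∀ N, Gbox w K R N / w N
      = ∑ m ∈ box K R, (∏ i, w (m i)) * (w (N - ∑ i, m i) / w N) := by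
    intro N
    rw [Gbox, Finset.sum_div]
    exact Finset.sum_congr rfl fun m _ => (mul_div_assoc _ _ _)
  have hval : (∑ j ∈ Finset.range (R+1), w j * φc ^ j) ^ K
      = ∑ m ∈ box K R, (∏ i, w (m i)) * φc ^ (∑ i, m i) := by
    have h1 : (∑ j ∈ Finset.range (R+1), w j * φc ^ j) ^ K
        = ∏ _i : Fin K, ∑ j ∈ Finset.range (R+1), w j * φc ^ j := by
      rw [Finset.prod_const, Finset.card_univ, Fintype.card_fin]
    rw [h1, Finset.prod_univ_sum]
    refine Finset.sum_congr rfl fun m _ => ?_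
    rw [Finset.prod_mul_distrib, Finset.prod_pow_eq_pow_sum]
  simp only [heq]
  rw [hval]
  exact tendsto_finset_sum _ fun m _ =>
    tendsto_const_nhds.mul (ratio_tendsto_s10 w hw φc hreg _)

lemma D_tendsto (w : ℕ → ℝ) (hw : ∀ n, 0 < w n) (φc : ℝ) (hφpos : 0 < φc)
    (hreg : Tendsto (fun n => w n / w (n + 1)) atTop (𝓝 φc))
    (hz : Summable fun n : ℕ => w n * φc ^ n) (K : ℕ)
    (hsub : Tendsto (fun N => Zconv w (K + 1) N / w N) atTop
      (𝓝 (((K : ℝ) + 1) * (∑' n : ℕ, w n * φc ^ n) ^ K)) ) :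
    Tendsto (fun N => Dden w K N / w N) atTop (𝓝 ((∑' n : ℕ, w n * φc ^ n) ^ K)) := by
  set z := ∑' n : ℕ, w n * φc ^ n with hzdef
  rw [Metric.tendsto_atTop]
  intro ε hε
  set δ := ε / (2*(K:ℝ)+4) with hδdef
  have hKnn : (0:ℝ) ≤ (K:ℝ) := Nat.cast_nonneg K
  have hδpos : 0 < δ := by positivity
  -- choose R
  have hP : Tendsto (fun r => (∑ j ∈ Finset.range r, w j * φc ^ j) ^ K) atTop (𝓝 (z^K)) :=
    (hz.hasSum.tendsto_sum_nat).pow K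
  rw [Metric.tendsto_atTop] at hP
  obtain ⟨R1, hR1⟩ := hP δ hδpos
  set R := R1 with hRdef
  have hPR := hR1 (R+1) (by omega)
  rw [Real.dist_eq, abs_lt] at hPR
  set P := (∑ j ∈ Finset.range (R+1), w j * φc ^ j) ^ K with hPdef
  have hPle : P ≤ z ^ K := by
    refine pow_le_pow_left₀ ?_ ?_ K
    · exact Finset.sum_nonneg fun j _ => mul_nonneg (hw j).le (pow_nonneg hφpos.le j)
    · exact Summable.sum_le_tsum _ (fun j _ => mul_nonneg (hw j).le (pow_nonneg hφpos.le j)) hz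
  rw [Metric.tendsto_atTop] at hsub
  obtain ⟨N1, hN1⟩ := hsub δ hδpos
  have hG := Gbox_tendsto w hw φc hreg K R
  rw [Metric.tendsto_atTop] at hG
  obtain ⟨N2, hN2⟩ := hG δ hδpos
  refine ⟨max (max N1 N2) ((K+1)*R + 1), fun N hN => ?_⟩
  have hNR : (K+1)*R < N := by
    have := le_trans (le_max_right _ _) hN; omega
  have hwN : 0 < w N := hw N
  have hGD : Gbox w K R N / w N ≤ Dden w K N / w N := by
    gcongr
    exact G_le_D w hw hNR
  have hDZ : Dden w K N / w N + (K:ℝ) * (Gbox w K R N / w N) ≤ Zconv w (K+1) N / w N := by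
    have h1 := D_add_G_le_Z (R := R) w hw hNR
    have h2 : (Dden w K N + (K:ℝ) * Gbox w K R N) / w N ≤ Zconv w (K+1) N / w N := by
      gcongr
    rw [add_div, mul_div_assoc] at h2
    exact h2
  have hZb := hN1 N (le_trans (le_trans (le_max_left _ _) (le_max_left _ _)) hN)
  have hGb := hN2 N (le_trans (le_trans (le_max_right _ _) (le_max_left _ _)) hN)
  rw [Real.dist_eq, abs_lt] at hZb hGb ⊢
  have hGlow : z^K - 2*δ < Gbox w K R N / w N := by
    have := hGb.1
    have := hPR.1
    linarith
  have hKG : (K:ℝ) * (z^K - 2*δ) ≤ (K:ℝ) * (Gbox w K R N / w N) :=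
    mul_le_mul_of_nonneg_left hGlow.le hKnn
  have hδe : (2*(K:ℝ)+4) * δ = ε := by
    rw [hδdef]; field_simp
  constructor
  · have : z^K - 2*δ < Dden w K N / w N := lt_of_lt_of_le hGlow hGD
    nlinarith
  · have hup : Dden w K N / w N ≤ Zconv w (K+1) N / w N - (K:ℝ) * (Gbox w K R N / w N) := by
      linarith
    have : Zconv w (K+1) N / w N < ((K:ℝ)+1) * z^K + δ := by
      have := hZb.2
      push_cast at this ⊢
      linarith
    nlinarith

lemma snoc_mem {K : ℕ} (m : Fin K → ℕ) (N : ℕ) (h : ∑ i, m i ≤ N) :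
    (Fin.snoc m (N - ∑ i, m i) : Fin (K+1) → ℕ) ∈ Finset.Nat.antidiagonalTuple (K+1) N := by
  rw [Finset.Nat.mem_antidiagonalTuple, snoc_sum]
  omega

lemma num_eq (w : ℕ → ℝ) (K : ℕ) (n : Fin K → ℕ) (N : ℕ) (hN : 2 * ∑ i, n i ≤ N) :
    (∑ η ∈ Finset.Nat.antidiagonalTuple (K + 1) N,
      if (∀ i : Fin K, η i.castSucc = n i) ∧ (∀ x, η x ≤ η (Fin.last K)) then
        ∏ x, w (η x) else 0) = (∏ i, w (n i)) * w (N - ∑ i, n i) := by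
  set S := ∑ i, n i with hS
  have hSN : S ≤ N := by omega
  have hni : ∀ i, n i ≤ N - S := by
    intro i
    have : n i ≤ S := Finset.single_le_sum (f := n) (fun j _ => Nat.zero_le _) (mem_univ i)
    omega
  set η₀ : Fin (K+1) → ℕ := Fin.snoc n (N - S) with hη₀
  rw [Finset.sum_eq_single_of_mem η₀ (snoc_mem n N hSN)]
  · rw [if_pos, snoc_prod]
    constructor
    · intro i; simp [hη₀]
    · intro x
      refine Fin.lastCases ?_ ?_ x
      · exact le_refl _
      · intro i
        simp only [hη₀, Fin.snoc_castSucc, Fin.snoc_last]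
        exact hni i
  · intro b hb hbne
    rw [if_neg]
    rintro ⟨h1, h2⟩
    apply hbne
    rw [Finset.Nat.mem_antidiagonalTuple, Fin.sum_univ_castSucc] at hb
    have hsum : ∑ i : Fin K, b i.castSucc = S := by
      rw [hS]; exact Finset.sum_congr rfl (fun i _ => h1 i)
    funext x
    refine Fin.lastCases ?_ ?_ x
    · simp only [hη₀, Fin.snoc_last]; omega
    · intro i; simp only [hη₀, Fin.snoc_castSucc]; exact h1 i

end Aux

/-- For condensing systems the distribution of the sites outside the maximum converges
pointwise to the critical product measure `Π_i w(n_i) φ_c^{n_i}/z(φ_c)`. -/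
theorem bulk_converges_to_critical (w : ℕ → ℝ) (hw : ∀ n, 0 < w n)
    (φc : ℝ) (hφpos : 0 < φc)
    (hreg : Tendsto (fun n => w n / w (n + 1)) atTop (𝓝 φc))
    (hz : Summable fun n : ℕ => w n * φc ^ n)
    (K : ℕ) (hK : 1 ≤ K)
    (hsub : Tendsto (fun N => Zconv w (K + 1) N / w N) atTop
      (𝓝 (((K : ℝ) + 1) * (∑' n : ℕ, w n * φc ^ n) ^ K)))
    (n : Fin K → ℕ) :
    Tendsto (fun N => condBulkProb w K n N) atTop
      (𝓝 (∏ i, w (n i) * φc ^ (n i) / ∑' m : ℕ, w m * φc ^ m)) := by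
  classical
  set z := ∑' m : ℕ, w m * φc ^ m with hzdef
  set S := ∑ i, n i with hSdef
  have hzpos : 0 < z := by
    have h0 : (0:ℝ) < w 0 * φc ^ 0 := by
      have := hw 0; simpa using this
    exact lt_of_lt_of_le h0
      (Summable.le_tsum hz 0 fun j _ => mul_nonneg (hw j).le (pow_nonneg hφpos.le j))
  have hnum : Tendsto (fun N => (∑ η ∈ Finset.Nat.antidiagonalTuple (K + 1) N,
      if (∀ i : Fin K, η i.castSucc = n i) ∧ (∀ x, η x ≤ η (Fin.last K)) then
        ∏ x, w (η x) else 0) / w N) atTop (𝓝 ((∏ i, w (n i)) * φc ^ S)) := by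
    have h1 := (tendsto_const_nhds (x := ∏ i, w (n i))
        (f := atTop (α := ℕ))).mul (ratio_tendsto_s10 w hw φc hreg S)
    refine h1.congr' ?_
    filter_upwards [eventually_ge_atTop (2*S)] with N hN
    rw [num_eq w K n N (by omega), mul_div_assoc]
  have hD := D_tendsto w hw φc hφpos hreg hz K hsub
  rw [← hzdef] at hD
  have hzK : (z : ℝ) ^ K ≠ 0 := by positivity
  have hlim := hnum.div hD hzK
  have hdiv : ∀ a b c : ℝ, c ≠ 0 → a / b = (a / c) / (b / c) := by
    intro a b c hc
    rcases eq_or_ne b 0 with rfl | hb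
    · simp
    · rw [div_div_div_comm, div_self hc, div_one]
  have hfun : ∀ N, condBulkProb w K n N
      = ((∑ η ∈ Finset.Nat.antidiagonalTuple (K + 1) N,
      if (∀ i : Fin K, η i.castSucc = n i) ∧ (∀ x, η x ≤ η (Fin.last K)) then
        ∏ x, w (η x) else 0) / w N) / (Dden w K N / w N) := by
    intro N
    rw [← hdiv _ _ _ (hw N).ne']
    rfl
  have hval : (∏ i, w (n i) * φc ^ (n i) / z) = ((∏ i, w (n i)) * φc ^ S) / z ^ K := by
    rw [Finset.prod_div_distrib, Finset.prod_const, Finset.card_univ, Fintype.card_fin,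
      Finset.prod_mul_distrib, Finset.prod_pow_eq_pow_sum]
  rw [hval]
  exact hlim.congr (fun N => (hfun N).symm)
end

section
/- For w(n) = n^{−2} (n ≥ 1), w(0) = 1, the two-site partition function satisfies (N/log N)·(Z_{2,N}/w(N) − 2z(1)) → 4 as N → ∞, where z(1) = 1 + Σ_{n≥1} n^{−2} = 1 + π²/6. -/
open Filter Topology

/-- Weights `w(0) = 1`, `w(n) = n^{-2}` for `n ≥ 1`. -/
noncomputable def wsq (n : ℕ) : ℝ :=
  if n = 0 then 1 else ((n : ℝ) ^ 2)⁻¹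

/-- Two-site partition function `Z_{2,N} = Σ_{n=0}^N w(n) w(N-n)`. -/
noncomputable def ZtwoSq (N : ℕ) : ℝ :=
  ∑ k ∈ Finset.range (N + 1), wsq k * wsq (N - k)

noncomputable def Srq (N : ℕ) : ℝ := ∑ k ∈ Finset.Ico 1 N, ((k : ℝ) ^ 2)⁻¹
noncomputable def Hrq (N : ℕ) : ℝ := ∑ k ∈ Finset.Ico 1 N, (k : ℝ)⁻¹
noncomputable def tailq (N : ℕ) : ℝ := ∑' k : ℕ, (((k : ℕ) + N : ℕ) ^ 2 : ℝ)⁻¹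

lemma term_id {N k : ℕ} (hk1 : 1 ≤ k) (hkN : k < N) :
    wsq k * wsq (N - k) / wsq N
      = ((k : ℝ) ^ 2)⁻¹ + (((N - k : ℕ) : ℝ) ^ 2)⁻¹
        + 2 / (N : ℝ) * ((k : ℝ)⁻¹ + ((N - k : ℕ) : ℝ)⁻¹) := by
  have hk0 : k ≠ 0 := by omega
  have hNk0 : N - k ≠ 0 := by omega
  have hN0 : N ≠ 0 := by omega
  have hc : ((N - k : ℕ) : ℝ) = (N : ℝ) - (k : ℝ) := by
    exact Nat.cast_sub hkN.le
  have hx : (0:ℝ) < (k : ℝ) := by exact_mod_cast hk1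
  have hy : (0:ℝ) < (N : ℝ) - (k : ℝ) := by
    have : (k : ℝ) < (N : ℝ) := by exact_mod_cast hkN
    linarith
  have hNpos : (0:ℝ) < (N : ℝ) := by positivity
  simp only [wsq, if_neg hk0, if_neg hNk0, if_neg hN0, hc]
  field_simp
  ring

lemma key_id {N : ℕ} (hN : 1 ≤ N) :
    ZtwoSq N / wsq N = 2 + 2 * Srq N + 4 / (N : ℝ) * Hrq N := by
  have hN0 : N ≠ 0 := by omega
  have hNpos : (0:ℝ) < (N : ℝ) := by positivity
  have hw : wsq N = ((N : ℝ) ^ 2)⁻¹ := if_neg hN0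
  have hwne : wsq N ≠ 0 := by rw [hw]; positivity
  have hsplit : ZtwoSq N
      = wsq N + (∑ k ∈ Finset.Ico 1 N, wsq k * wsq (N - k)) + wsq N := by
    rw [ZtwoSq, Finset.sum_range_succ, Finset.range_eq_Ico,
        Finset.sum_eq_sum_Ico_succ_bot (by omega : 0 < N)]
    simp [wsq]
  rw [hsplit, add_div, add_div, div_self hwne, Finset.sum_div]
  have hrefl2 : (∑ k ∈ Finset.Ico 1 N, (((N - k : ℕ) : ℝ) ^ 2)⁻¹) = Srq N := by
    have := Finset.sum_Ico_reflect (fun j => ((j : ℝ) ^ 2)⁻¹) 1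
      (n := N) (m := N) (by omega)
    simpa [Srq] using this
  have hrefl1 : (∑ k ∈ Finset.Ico 1 N, ((N - k : ℕ) : ℝ)⁻¹) = Hrq N := by
    have := Finset.sum_Ico_reflect (fun j => ((j : ℝ))⁻¹) 1
      (n := N) (m := N) (by omega)
    simpa [Hrq] using this
  have hsum : (∑ k ∈ Finset.Ico 1 N, wsq k * wsq (N - k) / wsq N)
      = 2 * Srq N + 4 / (N : ℝ) * Hrq N := by
    have hcg : (∑ k ∈ Finset.Ico 1 N, wsq k * wsq (N - k) / wsq N)
        = ∑ k ∈ Finset.Ico 1 N, (((k : ℝ) ^ 2)⁻¹ + (((N - k : ℕ) : ℝ) ^ 2)⁻¹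
            + 2 / (N : ℝ) * ((k : ℝ)⁻¹ + ((N - k : ℕ) : ℝ)⁻¹)) :=
      Finset.sum_congr rfl fun k hk => by
        have h := Finset.mem_Ico.mp hk
        exact term_id h.1 h.2
    rw [hcg, Finset.sum_add_distrib, Finset.sum_add_distrib, hrefl2,
        ← Finset.mul_sum, Finset.sum_add_distrib, hrefl1]
    have e1 : (∑ k ∈ Finset.Ico 1 N, ((k : ℝ) ^ 2)⁻¹) = Srq N := rfl
    have e2 : (∑ k ∈ Finset.Ico 1 N, ((k : ℝ))⁻¹) = Hrq N := rfl
    rw [e1, e2]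
    field_simp
    ring
  rw [hsum]
  ring

lemma srq_tail (N : ℕ) : Srq N + tailq N = Real.pi ^ 2 / 6 := by
  have h := hasSum_zeta_two
  have hs : Summable (fun n : ℕ => (1:ℝ) / (n : ℝ) ^ 2) := h.summable
  have h1 := Summable.sum_add_tsum_nat_add (f := fun n : ℕ => (1:ℝ) / (n : ℝ) ^ 2) N hs
  rw [h.tsum_eq] at h1
  have h2 : (∑ i ∈ Finset.range N, (1:ℝ) / (i : ℝ) ^ 2) = Srq N := by
    rw [Finset.range_eq_Ico, Srq]
    calc ∑ i ∈ Finset.Ico 0 N, (1:ℝ) / (i : ℝ) ^ 2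
        = ∑ i ∈ Finset.Ico 0 N, ((i : ℝ) ^ 2)⁻¹ :=
          Finset.sum_congr rfl fun k _ => one_div _
      _ = ∑ k ∈ Finset.Ico 1 N, ((k : ℝ) ^ 2)⁻¹ := ?_
    refine (Finset.sum_subset (Finset.Ico_subset_Ico (by omega) le_rfl :
        Finset.Ico 1 N ⊆ Finset.Ico 0 N) ?_).symm
    intro x hx hnx
    have : x = 0 := by
      simp only [Finset.mem_Ico] at hx hnx; omega
    simp [this]
  have h3 : (∑' (i : ℕ), (1:ℝ) / ((i + N : ℕ) : ℝ) ^ 2) = tailq N := by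
    rw [tailq]
    exact tsum_congr fun k => by rw [one_div]
  rw [h2, h3] at h1
  exact h1

lemma tailq_nonneg (N : ℕ) : 0 ≤ tailq N :=
  tsum_nonneg fun k => by positivity

lemma tailq_le {N : ℕ} (hN : 2 ≤ N) : tailq N ≤ ((N : ℝ) - 1)⁻¹ := by
  have hN1 : (1:ℝ) < (N : ℝ) := by exact_mod_cast hN.trans_lt' one_lt_two
  apply Real.tsum_le_of_sum_range_le (fun k => by positivity)
  intro m
  set g : ℕ → ℝ := fun k => ((k : ℝ) + (N : ℝ) - 1)⁻¹ with hg
  have hterm : ∀ k : ℕ, (((k : ℕ) + N : ℕ) ^ 2 : ℝ)⁻¹ ≤ g k - g (k + 1) := by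
    intro k
    have hx : (2:ℝ) ≤ (k : ℝ) + (N : ℝ) := by
      have : (2:ℝ) ≤ (N : ℝ) := by exact_mod_cast hN
      have : (0:ℝ) ≤ (k : ℝ) := Nat.cast_nonneg k
      linarith [show (2:ℝ) ≤ (N:ℝ) from by exact_mod_cast hN]
    set x : ℝ := (k : ℝ) + (N : ℝ) with hxdef
    have hx0 : 0 < x := by linarith
    have hx1 : 0 < x - 1 := by linarith
    have hcast : (((k : ℕ) + N : ℕ) ^ 2 : ℝ) = x ^ 2 := by push_cast; ring
    have hgk : g k = (x - 1)⁻¹ := by rw [hxdef]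
    have hgk1 : g (k + 1) = x⁻¹ := by
      simp only [hg]
      push_cast
      congr 1
      ring
    rw [hcast, hgk, hgk1]
    have heq : (x - 1)⁻¹ - x⁻¹ = ((x - 1) * x)⁻¹ := by
      field_simp
      ring
    rw [heq]
    apply inv_anti₀
    · positivity
    · nlinarith
  calc ∑ k ∈ Finset.range m, (((k : ℕ) + N : ℕ) ^ 2 : ℝ)⁻¹
      ≤ ∑ k ∈ Finset.range m, (g k - g (k + 1)) :=
        Finset.sum_le_sum fun k _ => hterm k
    _ = g 0 - g m := Finset.sum_range_sub' g m
    _ ≤ g 0 := by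
        have : 0 ≤ g m := by
          apply inv_nonneg.mpr
          have : (1:ℝ) ≤ (m : ℝ) + (N : ℝ) := by
            have : (0:ℝ) ≤ (m : ℝ) := Nat.cast_nonneg m
            linarith
          linarith
        linarith
    _ = ((N : ℝ) - 1)⁻¹ := by simp [hg]

lemma hrq_eq (n : ℕ) : Hrq (n + 1) = (harmonic n : ℝ) := by
  rw [Hrq, harmonic]
  push_cast
  rw [Finset.sum_Ico_eq_sum_range]
  simp only [Nat.add_sub_cancel]
  exact Finset.sum_congr rfl fun k _ => by push_cast; rw [add_comm]

lemma hrq_lb {N : ℕ} (hN : 1 ≤ N) : Real.log (N : ℝ) ≤ Hrq N := by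
  obtain ⟨n, rfl⟩ : ∃ n, N = n + 1 := ⟨N - 1, by omega⟩
  rw [hrq_eq]
  exact_mod_cast log_add_one_le_harmonic n

lemma hrq_ub {N : ℕ} (hN : 1 ≤ N) : Hrq N ≤ 1 + Real.log (N : ℝ) := by
  obtain ⟨n, rfl⟩ : ∃ n, N = n + 1 := ⟨N - 1, by omega⟩
  rw [hrq_eq]
  refine (harmonic_le_one_add_log n).trans ?_
  have : Real.log (n : ℝ) ≤ Real.log ((n : ℝ) + 1) := by
    rcases Nat.eq_zero_or_pos n with h | h
    · simp [h]
    · apply Real.log_le_log (by exact_mod_cast h)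
      linarith
  push_cast
  linarith

lemma log_tendsto : Tendsto (fun N : ℕ => Real.log (N : ℝ)) atTop atTop :=
  Real.tendsto_log_atTop.comp tendsto_natCast_atTop_atTop

lemma t1 : Tendsto (fun N : ℕ => Hrq N / Real.log (N : ℝ)) atTop (𝓝 1) := by
  have hinv : Tendsto (fun N : ℕ => (Real.log (N : ℝ))⁻¹) atTop (𝓝 0) :=
    log_tendsto.inv_tendsto_atTop
  have hub : Tendsto (fun N : ℕ => 1 + (Real.log (N : ℝ))⁻¹) atTop (𝓝 1) := by
    simpa using (tendsto_const_nhds (x := (1:ℝ))).add hinv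
  refine tendsto_of_tendsto_of_tendsto_of_le_of_le'
    (tendsto_const_nhds (x := (1:ℝ))) hub ?_ ?_
  · filter_upwards [eventually_ge_atTop 2] with N hN
    have hlog : 0 < Real.log (N : ℝ) := by
      apply Real.log_pos
      exact_mod_cast hN.trans_lt' one_lt_two
    rw [le_div_iff₀ hlog, one_mul]
    exact hrq_lb (by omega)
  · filter_upwards [eventually_ge_atTop 2] with N hN
    have hlog : 0 < Real.log (N : ℝ) := by
      apply Real.log_pos
      exact_mod_cast hN.trans_lt' one_lt_two
    rw [div_le_iff₀ hlog]
    have := hrq_ub (show 1 ≤ N by omega)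
    calc Hrq N ≤ 1 + Real.log (N : ℝ) := this
      _ = (1 + (Real.log (N:ℝ))⁻¹) * Real.log (N:ℝ) := by
          field_simp
          ring
  done

lemma t2 : Tendsto (fun N : ℕ => (N : ℝ) * tailq N / Real.log (N : ℝ)) atTop (𝓝 0) := by
  have hinv : Tendsto (fun N : ℕ => 2 * (Real.log (N : ℝ))⁻¹) atTop (𝓝 0) := by
    simpa using (log_tendsto.inv_tendsto_atTop).const_mul (2:ℝ)
  refine tendsto_of_tendsto_of_tendsto_of_le_of_le'
    (tendsto_const_nhds (x := (0:ℝ))) hinv ?_ ?_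
  · filter_upwards [eventually_ge_atTop 2] with N hN
    have hlog : 0 < Real.log (N : ℝ) := by
      apply Real.log_pos
      exact_mod_cast hN.trans_lt' one_lt_two
    have := tailq_nonneg N
    positivity
  · filter_upwards [eventually_ge_atTop 2] with N hN
    have hlog : 0 < Real.log (N : ℝ) := by
      apply Real.log_pos
      exact_mod_cast hN.trans_lt' one_lt_two
    have hN2 : (2:ℝ) ≤ (N : ℝ) := by exact_mod_cast hN
    have hbound : (N : ℝ) * tailq N ≤ 2 := by
      have h1 : tailq N ≤ ((N : ℝ) - 1)⁻¹ := tailq_le hN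
      have h2 : (N : ℝ) * tailq N ≤ (N : ℝ) * ((N : ℝ) - 1)⁻¹ := by
        apply mul_le_mul_of_nonneg_left h1 (by positivity)
      refine h2.trans ?_
      rw [mul_inv_le_iff₀ (by linarith)]
      linarith
    rw [div_le_iff₀ hlog]
    calc (N : ℝ) * tailq N ≤ 2 := hbound
      _ = 2 * (Real.log (N:ℝ))⁻¹ * Real.log (N:ℝ) := by field_simp

/-- For `w(n) = n^{-2}`: `(N/log N)(Z_{2,N}/w(N) − 2 z(1)) → 4` as `N → ∞`,
where `z(1) = 1 + π²/6`. -/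
theorem ZtwoSq_correction_limit :
    Tendsto
      (fun N : ℕ => ((N : ℝ) / Real.log N) *
        (ZtwoSq N / wsq N - 2 * (1 + Real.pi ^ 2 / 6)))
      atTop (𝓝 4) := by
  have hmain : Tendsto
      (fun N : ℕ => 4 * (Hrq N / Real.log (N : ℝ))
        - 2 * ((N : ℝ) * tailq N / Real.log (N : ℝ))) atTop (𝓝 4) := by
    have := (t1.const_mul (4:ℝ)).sub (t2.const_mul (2:ℝ))
    simpa using this
  refine hmain.congr' ?_
  filter_upwards [eventually_ge_atTop 2] with N hN
  have hN0 : (N : ℝ) ≠ 0 := by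
    have : (0:ℝ) < (N : ℝ) := by exact_mod_cast (by omega : 0 < N)
    exact this.ne'
  have hlog : 0 < Real.log (N : ℝ) := by
    apply Real.log_pos
    exact_mod_cast hN.trans_lt' one_lt_two
  have hD : ZtwoSq N / wsq N - 2 * (1 + Real.pi ^ 2 / 6)
      = 4 / (N : ℝ) * Hrq N - 2 * tailq N := by
    rw [key_id (by omega : 1 ≤ N), ← srq_tail N]
    ring
  rw [hD]
  field_simp
end

section
/- Consider a misanthrope process whose stationary product weights satisfy w(n−1)/w(n) = r(n,0)/r(1,n−1), where the rates satisfy the monotonicity conditions r(n,m) ≤ r(n+1,m) and r(n,m) ≥ r(n,m+1). Then w(n−1)/w(n) is non-decreasing in n, hence converges to some φ_c ∈ (0,∞]; and if φ_c < ∞ then w(n) ≥ w(0) φ_c^{−n} for all n, so Σ_n w(n) φ_c^n = ∞, i.e. the critical partition function diverges and the process cannot condense. -/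
open Filter Topology

/-- Stationary weights of a misanthrope process:
`w(n) = Π_{k=1}^n r(1,k-1)/r(k,0)`. -/
noncomputable def misWeight (r : ℕ → ℕ → ℝ) (n : ℕ) : ℝ :=
  ∏ k ∈ Finset.range n, r 1 k / r (k + 1) 0

/-- For an attractive misanthrope process the ratio `w(n-1)/w(n) = r(n,0)/r(1,n-1)` is
non-decreasing in `n`, hence converges to some `φ_c ∈ (0,∞]`; if `φ_c < ∞` then
`w(n) ≥ w(0) φ_c^{-n}`, so the critical partition function `Σ w(n) φ_c^n` diverges
and the process cannot condense. -/
theorem misanthrope_not_condensing (r : ℕ → ℕ → ℝ)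
    (hrpos : ∀ n, 1 ≤ n → ∀ m, 0 < r n m)
    (hmono1 : ∀ n, 1 ≤ n → ∀ m, r n m ≤ r (n + 1) m)
    (hmono2 : ∀ n, 1 ≤ n → ∀ m, r n (m + 1) ≤ r n m) :
    Monotone (fun n : ℕ => r (n + 1) 0 / r 1 n) ∧
    (∃ φc : ENNReal, 0 < φc ∧
      Tendsto (fun n : ℕ => ENNReal.ofReal (r (n + 1) 0 / r 1 n)) atTop (𝓝 φc)) ∧
    (∀ φc : ℝ, 0 < φc →
      Tendsto (fun n : ℕ => r (n + 1) 0 / r 1 n) atTop (𝓝 φc) →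
      (∀ n : ℕ, misWeight r n ≥ misWeight r 0 * φc⁻¹ ^ n) ∧
      ¬ Summable fun n : ℕ => misWeight r n * φc ^ n) := by
  have hpos : ∀ n : ℕ, 0 < r (n + 1) 0 / r 1 n := fun n =>
    div_pos (hrpos (n + 1) (Nat.le_add_left 1 n) 0) (hrpos 1 le_rfl n)
  have hmono : Monotone (fun n : ℕ => r (n + 1) 0 / r 1 n) := by
    apply monotone_nat_of_le_succ
    intro n
    exact div_le_div₀ (hrpos (n + 2) (Nat.le_add_left 1 (n + 1)) 0).le
      (hmono1 (n + 1) (Nat.le_add_left 1 n) 0) (hrpos 1 le_rfl (n + 1))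
      (hmono2 1 le_rfl n)
  refine ⟨hmono, ?_, ?_⟩
  · have hmono' : Monotone (fun n : ℕ => ENNReal.ofReal (r (n + 1) 0 / r 1 n)) :=
      fun a b hab => ENNReal.ofReal_le_ofReal (hmono hab)
    refine ⟨⨆ n, ENNReal.ofReal (r (n + 1) 0 / r 1 n), ?_, ?_⟩
    · exact lt_of_lt_of_le (ENNReal.ofReal_pos.mpr (hpos 0)) (le_iSup (fun n : ℕ => ENNReal.ofReal (r (n + 1) 0 / r 1 n)) 0)
    · exact tendsto_atTop_iSup hmono'
  · intro φc hφc htend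
    have hle : ∀ n : ℕ, r (n + 1) 0 / r 1 n ≤ φc := fun n => hmono.ge_of_tendsto htend n
    have hkey : ∀ n : ℕ, φc⁻¹ ^ n ≤ misWeight r n := by
      intro n
      have : ∏ _k ∈ Finset.range n, φc⁻¹ ≤ ∏ k ∈ Finset.range n, r 1 k / r (k + 1) 0 := by
        apply Finset.prod_le_prod
        · intro i _; positivity
        · intro i _
          have h1 : r (i + 1) 0 / r 1 i ≤ φc := hle i
          have h2 : 0 < r (i + 1) 0 / r 1 i := hpos i
          have := one_div_le_one_div_of_le h2 h1
          rwa [one_div, one_div, inv_div] at this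
      simpa [misWeight] using this
    constructor
    · intro n
      have : misWeight r 0 = 1 := by simp [misWeight]
      rw [this, one_mul]
      exact hkey n
    · intro hsum
      have h0 := hsum.tendsto_atTop_zero
      have hge : ∀ n : ℕ, (1 : ℝ) ≤ misWeight r n * φc ^ n := by
        intro n
        have h1 : φc⁻¹ ^ n * φc ^ n ≤ misWeight r n * φc ^ n :=
          mul_le_mul_of_nonneg_right (hkey n) (by positivity)
        rwa [← mul_pow, inv_mul_cancel₀ hφc.ne', one_pow] at h1
      have : (1 : ℝ) ≤ 0 := ge_of_tendsto h0 (Eventually.of_forall hge)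
      linarith
end

section
/- For the generalized zero-range rates α_k(n) = k^{−b}(1−k/n)^{−b} for 1 ≤ k ≤ n−1, α_n(n)=1 (b > 0), the function k ↦ α_k(n+1) − R_k(n) is increasing in k for k ∈ {1,…,n}, where R_k(n) = Σ_{m=0}^{n−k}(α_{n−m}(n) − α_{n+1−m}(n+1)); hence the monotonicity condition α_k(n+1) ≥ R_k(n) for all k holds if and only if α_1(n+1) ≥ R_1(n). -/
/-- Generalized zero-range jump rates:
`α_k(n) = k^{-b}(1-k/n)^{-b}` for `1 ≤ k ≤ n-1`, `α_n(n) = 1`, `α_0(n) = 0`. -/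
noncomputable def gzrRate (b : ℝ) (k n : ℕ) : ℝ :=
  if k = 0 ∨ n = 0 then 0
  else if k < n then (k : ℝ) ^ (-b) * (1 - (k : ℝ) / (n : ℝ)) ^ (-b)
  else if k = n then 1
  else 0

/-- `R_k(n) = Σ_{m=0}^{n-k} (α_{n-m}(n) − α_{n+1-m}(n+1))`. -/
noncomputable def gzrR (b : ℝ) (k n : ℕ) : ℝ :=
  ∑ m ∈ Finset.range (n - k + 1), (gzrRate b (n - m) n - gzrRate b (n + 1 - m) (n + 1))

lemma gzrR_succ (b : ℝ) {k n : ℕ} (hk : 1 ≤ k) (hkn : k < n) :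
    gzrR b k n = gzrR b (k + 1) n + (gzrRate b k n - gzrRate b (k + 1) (n + 1)) := by
  unfold gzrR
  have h1 : n - k + 1 = (n - (k + 1) + 1) + 1 := by omega
  rw [h1, Finset.sum_range_succ]
  have h2 : n - (k + 1) + 1 = n - k := by omega
  have h3 : n - (n - k) = k := by omega
  have h4 : n + 1 - (n - k) = k + 1 := by omega
  rw [h2, h3, h4]

lemma gzrRate_strict (b : ℝ) (hb : 0 < b) {k n : ℕ} (hk : 1 ≤ k) (hkn : k < n) :
    gzrRate b k (n + 1) < gzrRate b k n := by
  have hk0 : (0:ℝ) < k := by exact_mod_cast hk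
  have hn0 : (0:ℝ) < n := by exact_mod_cast (by omega : 0 < n)
  have hkn' : (k:ℝ) < n := by exact_mod_cast hkn
  unfold gzrRate
  rw [if_neg (show ¬(k = 0 ∨ n + 1 = 0) by omega),
      if_pos (show k < n + 1 by omega),
      if_neg (show ¬(k = 0 ∨ n = 0) by omega),
      if_pos hkn]
  apply mul_lt_mul_of_pos_left _ (Real.rpow_pos_of_pos hk0 _)
  have hd : (k:ℝ) / (n + 1) < (k:ℝ) / n := div_lt_div_of_pos_left hk0 hn0 (lt_add_one _)
  have hd1 : (k:ℝ) / n < 1 := (div_lt_one hn0).mpr hkn'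
  have : (1 - (k:ℝ)/(↑(n+1))) ^ (-b) < (1 - (k:ℝ)/n) ^ (-b) := by
    push_cast
    exact Real.rpow_lt_rpow_of_neg (by linarith) (by linarith) (by linarith)
  exact_mod_cast this

/-- `k ↦ α_k(n+1) − R_k(n)` is increasing on `{1,…,n}`; hence the monotonicity
condition `α_k(n+1) ≥ R_k(n)` for all `k ∈ {1,…,n}` holds iff it holds at `k = 1`. -/
theorem gzr_monotonicity_reduces_to_k_one (b : ℝ) (hb : 0 < b) (n : ℕ) (hn : 1 ≤ n) :
    (∀ k : ℕ, 1 ≤ k → k < n →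
      gzrRate b k (n + 1) - gzrR b k n < gzrRate b (k + 1) (n + 1) - gzrR b (k + 1) n) ∧
    ((∀ k : ℕ, 1 ≤ k → k ≤ n → gzrR b k n ≤ gzrRate b k (n + 1)) ↔
      gzrR b 1 n ≤ gzrRate b 1 (n + 1)) := by
  have mono : ∀ k : ℕ, 1 ≤ k → k < n →
      gzrRate b k (n + 1) - gzrR b k n < gzrRate b (k + 1) (n + 1) - gzrR b (k + 1) n := by
    intro k hk hkn
    rw [gzrR_succ b hk hkn]
    have := gzrRate_strict b hb hk hkn
    linarith
  refine ⟨mono, ⟨fun h => h 1 le_rfl hn, fun h1 k hk hkn => ?_⟩⟩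
  have key : ∀ k : ℕ, 1 ≤ k → k ≤ n →
      gzrRate b 1 (n + 1) - gzrR b 1 n ≤ gzrRate b k (n + 1) - gzrR b k n := by
    intro k
    induction k with
    | zero => omega
    | succ j ih =>
      intro _ hle
      rcases Nat.eq_or_lt_of_le (Nat.one_le_iff_ne_zero.mpr (by omega) : 1 ≤ j + 1) with h | h
      · rw [← h]
      · have hj1 : 1 ≤ j := by omega
        have := ih hj1 (by omega)
        have := mono j hj1 (by omega)
        linarith
  have := key k hk hkn
  linarith
end
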